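/- arXiv:1708.02516 — 14 statements merged into one kernel-verified Lean document; each statement's English description precedes it below -/
import Mathlib

section
/- Let X be a first countable Hausdorff real topological vector space, μ a nonzero Borel measure on X that is finite on bounded sets, and K a bounded open neighbourhood of the origin. If E ⊆ X is topologically dense in X, then a point u is an E-strong mode of μ if and only if u is a strong mode of μ. -/
open MeasureTheory Filter Set Topology
open scoped ENNReal NNReal
open scoped Pointwise

/-- `fK μ K x r = μ(x + r • K)`, the mass of the scaled translated copy of `K`. -/
noncomputable def fK {X : Type*} [AddCommGroup X] [Module ℝ X] [MeasurableSpace X]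
    (μ : Measure X) (K : Set X) (x : X) (r : ℝ) : ℝ≥0∞ :=
  μ ((fun y => x + r • y) '' K)

/-- The topological support of a Borel measure. -/
def measSupport {X : Type*} [TopologicalSpace X] [MeasurableSpace X]
    (μ : Measure X) : Set X :=
  {x | ∀ U : Set X, IsOpen U → x ∈ U → 0 < μ U}

/-- `u` is a strong mode of `μ` (w.r.t. the reference neighbourhood `K`). -/
def IsStrongMode {X : Type*} [AddCommGroup X] [Module ℝ X] [TopologicalSpace X]
    [MeasurableSpace X] (μ : Measure X) (K : Set X) (u : X) : Prop :=
  Tendsto (fun r : ℝ => (⨆ z : X, fK μ K z r) / fK μ K u r) (𝓝[>] (0:ℝ)) (𝓝 1)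

/-- `u` is an `E`-strong mode of `μ`. -/
def IsEStrongMode {X : Type*} [AddCommGroup X] [Module ℝ X] [TopologicalSpace X]
    [MeasurableSpace X] (μ : Measure X) (K : Set X) (E : Set X) (u : X) : Prop :=
  u ∈ measSupport μ ∧
    limsup (fun r : ℝ => (⨆ v ∈ E, fK μ K (u - v) r) / fK μ K u r) (𝓝[>] (0:ℝ)) ≤ 1

/-- `u` is an `E`-weak mode of `μ`. -/
def IsEWeakMode {X : Type*} [AddCommGroup X] [Module ℝ X] [TopologicalSpace X]
    [MeasurableSpace X] (μ : Measure X) (K : Set X) (E : Set X) (u : X) : Prop :=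
  u ∈ measSupport μ ∧
    ∀ v ∈ E, limsup (fun r : ℝ => fK μ K (u - v) r / fK μ K u r) (𝓝[>] (0:ℝ)) ≤ 1

/-- The uniformity condition for the pair `(u, E)`. -/
def UniformityCondition {X : Type*} [AddCommGroup X] [Module ℝ X]
    [MeasurableSpace X] (μ : Measure X) (K : Set X) (E : Set X) (u : X) : Prop :=
  ∃ v ∈ E, ∃ rs : ℝ, rs ∈ Set.Ioo (0:ℝ) 1 ∧
    ∀ r ∈ Set.Ioo (0:ℝ) rs, fK μ K (u - v) r = ⨆ w ∈ E, fK μ K (u - w) r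

/-- The coincident limiting ratios condition for the pair `(u, E)`. -/
def CLRCondition {X : Type*} [AddCommGroup X] [Module ℝ X] [MeasurableSpace X]
    (μ : Measure X) (K : Set X) (E : Set X) (u : X) : Prop :=
  limsup (fun r : ℝ => (⨆ v ∈ E, fK μ K (u - v) r) / fK μ K u r) (𝓝[>] (0:ℝ)) =
    limsup (fun r : ℝ => (⨆ z : X, fK μ K z r) / fK μ K u r) (𝓝[>] (0:ℝ))

section Aux
open Bornology
open scoped Pointwise
variable {X : Type*} [AddCommGroup X] [Module ℝ X] [TopologicalSpace X]
    [IsTopologicalAddGroup X] [ContinuousSMul ℝ X] [MeasurableSpace X]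
    {μ : Measure X} {K : Set X}

lemma img_eq (K : Set X) (z : X) (r : ℝ) :
    (fun y => z + r • y) '' K = z +ᵥ (r • K) := by
  rw [← Set.image_smul, ← Set.image_vadd, Set.image_image]
  rfl

lemma img_open (hKopen : IsOpen K) {r : ℝ} (hr : r ≠ 0) (z : X) :
    IsOpen ((fun y => z + r • y) '' K) := by
  rw [img_eq]
  exact (hKopen.smul₀ hr).vadd z

lemma img_mem (hK0 : (0:X) ∈ K) (z : X) (r : ℝ) :
    z ∈ (fun y => z + r • y) '' K := ⟨0, hK0, by simp⟩

lemma img_bounded (hKbdd : IsVonNBounded ℝ K) (z : X) (r : ℝ) :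
    IsVonNBounded ℝ ((fun y => z + r • y) '' K) := by
  rw [img_eq]
  have h1 : IsVonNBounded ℝ (r • K) := by
    have := hKbdd.image (r • ContinuousLinearMap.id ℝ X)
    simpa using this
  exact h1.vadd z

set_option linter.unusedSectionVars false

lemma fatou_seq (μ : Measure X) (K : Set X) (hKopen : IsOpen K) {r : ℝ} (hr : r ≠ 0)
    (w : ℕ → X) (z : X) (hw : Tendsto w atTop (𝓝 z)) :
    fK μ K z r ≤ ⨆ n, fK μ K (w n) r := by
  set S : X → Set X := fun x => (fun y => x + r • y) '' K with hS
  set T : ℕ → Set X := fun N => ⋂ n, ⋂ (_ : N ≤ n), S (w n) with hT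
  have hmono : Monotone T := by
    intro a b hab
    exact Set.iInter_mono fun n => Set.iInter_mono' fun h => ⟨le_trans hab h, subset_rfl⟩
  have hsub : S z ⊆ ⋃ N, T N := by
    rintro x ⟨y, hy, rfl⟩
    have hcont : Tendsto (fun n => r⁻¹ • (z + r • y - w n)) atTop
        (𝓝 (r⁻¹ • (z + r • y - z))) := (tendsto_const_nhds.sub hw).const_smul _
    have heq : r⁻¹ • (z + r • y - z) = y := by
      rw [add_sub_cancel_left, smul_smul, inv_mul_cancel₀ hr, one_smul]
    rw [heq] at hcont
    have hev : ∀ᶠ n in atTop, r⁻¹ • (z + r • y - w n) ∈ K :=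
      hcont.eventually_mem (hKopen.mem_nhds hy)
    obtain ⟨N, hN⟩ := eventually_atTop.mp hev
    refine Set.mem_iUnion.2 ⟨N, Set.mem_iInter.2 fun n => Set.mem_iInter.2 fun hn => ?_⟩
    refine ⟨r⁻¹ • (z + r • y - w n), hN n hn, ?_⟩
    show w n + r • r⁻¹ • (z + r • y - w n) = z + r • y
    rw [smul_smul, mul_inv_cancel₀ hr, one_smul]
    abel
  calc μ (S z) ≤ μ (⋃ N, T N) := measure_mono hsub
    _ = ⨆ N, μ (T N) := hmono.measure_iUnion
    _ ≤ ⨆ N, μ (S (w N)) := iSup_mono fun N => measure_mono (Set.iInter₂_subset N le_rfl)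

lemma sup_eq_of_dense [FirstCountableTopology X]
    (μ : Measure X) (K : Set X) (hKopen : IsOpen K) {r : ℝ} (hr : r ≠ 0)
    {E : Set X} (hE : Dense E) (u : X) :
    (⨆ z : X, fK μ K z r) = ⨆ v ∈ E, fK μ K (u - v) r := by
  refine le_antisymm (iSup_le fun z => ?_) (iSup₂_le fun v _ => le_iSup (fun z => fK μ K z r) (u - v))
  have hD : Dense ((fun v => u - v) '' E) := by
    have h2 := ((Homeomorph.neg X).trans (Homeomorph.addLeft u)).isDenseEmbedding.dense_image.mpr hE
    have h3 : ⇑((Homeomorph.neg X).trans (Homeomorph.addLeft u)) = fun v => u - v := by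
      funext v; simp [sub_eq_add_neg]
    rwa [h3] at h2
  have hz : z ∈ closure ((fun v => u - v) '' E) := hD z
  obtain ⟨x, hxD, hxz⟩ := mem_closure_iff_seq_limit.mp hz
  choose v hvE hvx using hxD
  calc fK μ K z r ≤ ⨆ n, fK μ K (x n) r := fatou_seq μ K hKopen hr x z hxz
    _ ≤ ⨆ v ∈ E, fK μ K (u - v) r := by
        refine iSup_le fun n => ?_
        rw [← hvx n]
        exact le_iSup₂ (f := fun w (_ : w ∈ E) => fK μ K (u - w) r) (v n) (hvE n)

end Aux

/-- Theorem 2.5 of Lie–Sullivan. Let `X` be a first countable Hausdorff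
real topological vector space, `μ` a nonzero Borel measure on `X` that is finite on
(von Neumann) bounded sets, and `K` a bounded open neighbourhood of the origin. If `E ⊆ X`
is topologically dense, then `u` is an `E`-strong mode iff `u` is a strong mode. -/
theorem equivalence_Estrong_strong
    {X : Type*} [AddCommGroup X] [Module ℝ X] [TopologicalSpace X]
    [IsTopologicalAddGroup X] [ContinuousSMul ℝ X] [T2Space X]
    [FirstCountableTopology X] [MeasurableSpace X] [BorelSpace X]
    (μ : Measure X) (hμ : μ ≠ 0)
    (hfin : ∀ s : Set X, Bornology.IsVonNBounded ℝ s → μ s ≠ ⊤)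
    (K : Set X) (hKopen : IsOpen K) (hK0 : (0:X) ∈ K)
    (hKbdd : Bornology.IsVonNBounded ℝ K)
    (E : Set X) (hE : Dense E) (u : X) :
    IsEStrongMode μ K E u ↔ IsStrongMode μ K u := by
  set g : ℝ → ℝ≥0∞ := fun r => (⨆ z : X, fK μ K z r) / fK μ K u r with hg
  have hev : ∀ᶠ r in 𝓝[>](0:ℝ),
      (⨆ v ∈ E, fK μ K (u - v) r) / fK μ K u r = g r := by
    filter_upwards [eventually_mem_nhdsWithin] with r hr
    show (⨆ v ∈ E, fK μ K (u - v) r) / fK μ K u r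
        = (⨆ z : X, fK μ K z r) / fK μ K u r
    rw [sup_eq_of_dense μ K hKopen (ne_of_gt hr) hE u]
  constructor
  · rintro ⟨hsupp, hls⟩
    have hlsg : limsup g (𝓝[>](0:ℝ)) ≤ 1 := by
      rw [← limsup_congr hev]; exact hls
    have hone : ∀ᶠ r in 𝓝[>](0:ℝ), 1 ≤ g r := by
      filter_upwards [eventually_mem_nhdsWithin] with r hr
      have hs : ∀ U : Set X, IsOpen U → u ∈ U → 0 < μ U := hsupp
      have h1 : fK μ K u r ≠ 0 :=
        (hs _ (img_open hKopen (ne_of_gt hr) u) (img_mem hK0 u r)).ne'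
      have h2 : fK μ K u r ≠ ⊤ := hfin _ (img_bounded hKbdd u r)
      calc (1:ℝ≥0∞) = fK μ K u r / fK μ K u r := (ENNReal.div_self h1 h2).symm
        _ ≤ g r := ENNReal.div_le_div_right (le_iSup (fun z => fK μ K z r) u) _
    have hub : limsup g (𝓝[>](0:ℝ)) = 1 :=
      le_antisymm hlsg (le_limsup_of_frequently_le hone.frequently)
    have hlb : liminf g (𝓝[>](0:ℝ)) = 1 :=
      le_antisymm (le_trans liminf_le_limsup hlsg) (le_liminf_of_le (by isBoundedDefault) hone)
    exact tendsto_of_liminf_eq_limsup hlb hub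
  · intro h
    have hsupp : u ∈ measSupport μ := by
      by_contra hns
      simp only [measSupport, Set.mem_setOf_eq, not_forall] at hns
      obtain ⟨U, hUo, hUu, hU⟩ := hns
      have hU0 : μ U = 0 := by simpa using hU
      set V : Set X := (fun x => u + x) ⁻¹' U with hV
      have hVnhds : V ∈ 𝓝 (0:X) :=
        (hUo.preimage (continuous_const.add continuous_id)).mem_nhds (by simpa [hV] using hUu)
      have habs : ∀ᶠ c in Bornology.cobounded ℝ, K ⊆ c • V := hKbdd hVnhds
      have hat : Filter.atTop ≤ Bornology.cobounded ℝ := by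
        rw [Real.cobounded_eq]; exact le_sup_right
      have h2 : ∀ᶠ r in 𝓝[>](0:ℝ), K ⊆ r⁻¹ • V :=
        (tendsto_inv_nhdsGT_zero.mono_right hat).eventually habs
      have h3 : ∀ᶠ r in 𝓝[>](0:ℝ), fK μ K u r = 0 := by
        filter_upwards [h2, eventually_mem_nhdsWithin] with r hKV hr
        have hr0 : r ≠ 0 := ne_of_gt hr
        refine measure_mono_null ?_ hU0
        rintro x ⟨y, hy, rfl⟩
        obtain ⟨w, hw, hwy⟩ := hKV hy
        have hrw : r • y ∈ V := by
          rw [← hwy, smul_smul, mul_inv_cancel₀ hr0, one_smul]; exact hw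
        simpa [hV] using hrw
      have h4 : ∀ᶠ r in 𝓝[>](0:ℝ), g r ∈ Set.Ioo (1/2 : ℝ≥0∞) 2 :=
        h (isOpen_Ioo.mem_nhds (by constructor <;> norm_num))
      obtain ⟨r, hgmem, hfz⟩ := (h4.and h3).exists
      by_cases hz : (⨆ z : X, fK μ K z r) = 0
      · have hzero : g r = 0 := by simp [hg, hz]
        rw [hzero] at hgmem
        simp at hgmem
      · have htop : g r = ⊤ := by rw [hg]; simp only []; rw [hfz, ENNReal.div_zero hz]
        exact not_top_lt (htop ▸ hgmem.2)
    refine ⟨hsupp, ?_⟩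
    rw [limsup_congr hev]
    exact le_of_eq h.limsup_eq
end

section
/- Let X be a first countable Hausdorff real topological vector space, μ a nonzero Borel measure on X that is finite on bounded sets, and K a bounded open neighbourhood of the origin. Let E ⊆ X be nonempty and u ∈ supp(μ). If the pair (u,E) satisfies the uniformity condition — there exist v* ∈ E and r* ∈ (0,1) such that f(u−v*,r) = sup_{z∈u−E} f(z,r) for all r ∈ (0,r*) — then u is an E-weak mode of μ if and only if u is an E-strong mode of μ. -/
open MeasureTheory Filter Set Topology
open scoped ENNReal NNReal

/-- Theorem 2.6. If the pair `(u,E)` satisfies the uniformity condition,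
then `u` is an `E`-weak mode iff `u` is an `E`-strong mode. -/
theorem equivalence_Eweak_Estrong
    {X : Type*} [AddCommGroup X] [Module ℝ X] [TopologicalSpace X]
    [IsTopologicalAddGroup X] [ContinuousSMul ℝ X] [T2Space X]
    [FirstCountableTopology X] [MeasurableSpace X] [BorelSpace X]
    (μ : Measure X) (hμ : μ ≠ 0)
    (hfin : ∀ s : Set X, Bornology.IsVonNBounded ℝ s → μ s ≠ ⊤)
    (K : Set X) (hKopen : IsOpen K) (hK0 : (0:X) ∈ K)
    (hKbdd : Bornology.IsVonNBounded ℝ K)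
    (E : Set X) (hE : E.Nonempty) (u : X) (hu : u ∈ measSupport μ)
    (hunif : UniformityCondition μ K E u) :
    IsEWeakMode μ K E u ↔ IsEStrongMode μ K E u := by
  obtain ⟨v, hvE, rs, ⟨hrs0, hrs1⟩, hru⟩ := hunif
  constructor
  · rintro ⟨-, hweak⟩
    refine ⟨hu, ?_⟩
    have heq : (fun r : ℝ => (⨆ w ∈ E, fK μ K (u - w) r) / fK μ K u r)
        =ᶠ[𝓝[>] (0:ℝ)] (fun r => fK μ K (u - v) r / fK μ K u r) := by
      filter_upwards [Ioo_mem_nhdsGT hrs0] with r hr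
      rw [hru r hr]
    rw [limsup_congr heq]
    exact hweak v hvE
  · rintro ⟨-, hstrong⟩
    refine ⟨hu, fun w hwE => ?_⟩
    have hle : ∀ᶠ r in 𝓝[>] (0:ℝ), fK μ K (u - w) r / fK μ K u r ≤
        (⨆ v ∈ E, fK μ K (u - v) r) / fK μ K u r := by
      filter_upwards with r
      exact ENNReal.div_le_div_right (le_biSup _ hwE) _
    exact le_trans (limsup_le_limsup hle) hstrong
end

section
/- Let X be a first countable Hausdorff real topological vector space, μ a nonzero Borel measure on X that is finite on bounded sets, and K a bounded open neighbourhood of the origin. If E ⊆ X is topologically dense in X, u ∈ supp(μ), and the pair (u,E) satisfies the uniformity condition — there exist v* ∈ E and r* ∈ (0,1) such that f(u−v*,r) = sup_{z∈u−E} f(z,r) for all r ∈ (0,r*) — then u is an E-weak mode of μ if and only if u is a strong mode of μ. -/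
open MeasureTheory Filter Set Topology
open scoped ENNReal NNReal Pointwise

section Aux

variable {X : Type*} [AddCommGroup X] [Module ℝ X] [TopologicalSpace X]
    [IsTopologicalAddGroup X] [ContinuousSMul ℝ X]
    [MeasurableSpace X] [BorelSpace X]

lemma mem_image_affine {K : Set X} {x y : X} {r : ℝ} (hr : r ≠ 0) :
    y ∈ (fun t => x + r • t) '' K ↔ r⁻¹ • (y - x) ∈ K := by
  constructor
  · rintro ⟨k, hk, rfl⟩
    simpa [smul_smul, inv_mul_cancel₀ hr] using hk
  · intro h
    exact ⟨r⁻¹ • (y - x), h, by simp [smul_smul, mul_inv_cancel₀ hr]⟩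

lemma fK_eq (μ : Measure X) (K : Set X) (x : X) {r : ℝ} (hr : r ≠ 0) :
    fK μ K x r = μ ((fun y => r⁻¹ • (y - x)) ⁻¹' K) := by
  unfold fK
  congr 1
  ext y
  simpa using mem_image_affine (K := K) (x := x) (y := y) hr

lemma cont_aux (x : X) {r : ℝ} : Continuous fun y : X => r⁻¹ • (y - x) :=
  (continuous_id.sub continuous_const).const_smul _

/-- Lower semicontinuity along sequences of `fK` in the spatial variable. -/
lemma fK_le_liminf (μ : Measure X) {K : Set X} (hKopen : IsOpen K) {r : ℝ}
    (hr : r ≠ 0) {z : X} {w : ℕ → X} (hw : Tendsto w atTop (𝓝 z)) :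
    fK μ K z r ≤ atTop.liminf fun n => fK μ K (w n) r := by
  have hopen : ∀ x : X, IsOpen ((fun y => r⁻¹ • (y - x)) ⁻¹' K) :=
    fun x => hKopen.preimage (cont_aux x)
  simp only [fK_eq μ K _ hr]
  set S : X → Set X := fun x => (fun y => r⁻¹ • (y - x)) ⁻¹' K with hS
  calc μ (S z) = ∫⁻ y, (S z).indicator 1 y ∂μ :=
        (lintegral_indicator_one (hopen z).measurableSet).symm
    _ ≤ ∫⁻ y, atTop.liminf (fun n => (S (w n)).indicator 1 y) ∂μ := by
        refine lintegral_mono fun y => ?_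
        by_cases hy : y ∈ S z
        · rw [Set.indicator_of_mem hy]
          refine Filter.le_liminf_of_le (by isBoundedDefault) ?_
          have htend : Tendsto (fun n => r⁻¹ • (y - w n)) atTop (𝓝 (r⁻¹ • (y - z))) :=
            (tendsto_const_nhds.sub hw).const_smul _
          have hmem : ∀ᶠ n in atTop, y ∈ S (w n) :=
            htend.eventually (hKopen.mem_nhds hy)
          filter_upwards [hmem] with n hn
          rw [Set.indicator_of_mem hn]
        · simp [Set.indicator_of_notMem hy]
    _ ≤ atTop.liminf fun n => ∫⁻ y, (S (w n)).indicator 1 y ∂μ :=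
        lintegral_liminf_le fun n => measurable_one.indicator (hopen _).measurableSet
    _ = atTop.liminf fun n => μ (S (w n)) := by
        congr 1; funext n; exact lintegral_indicator_one (hopen _).measurableSet

end Aux

set_option maxHeartbeats 1000000 in
/-- Corollary 2.7. If `E` is topologically dense in `X` and the pair
`(u,E)` satisfies the uniformity condition, then `u` is an `E`-weak mode iff `u` is a
strong mode. -/
theorem Eweak_iff_strong_of_dense_of_uniformity
    {X : Type*} [AddCommGroup X] [Module ℝ X] [TopologicalSpace X]
    [IsTopologicalAddGroup X] [ContinuousSMul ℝ X] [T2Space X]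
    [FirstCountableTopology X] [MeasurableSpace X] [BorelSpace X]
    (μ : Measure X) (hμ : μ ≠ 0)
    (hfin : ∀ s : Set X, Bornology.IsVonNBounded ℝ s → μ s ≠ ⊤)
    (K : Set X) (hKopen : IsOpen K) (hK0 : (0:X) ∈ K)
    (hKbdd : Bornology.IsVonNBounded ℝ K)
    (E : Set X) (hE : Dense E) (u : X) (hu : u ∈ measSupport μ)
    (hunif : UniformityCondition μ K E u) :
    IsEWeakMode μ K E u ↔ IsStrongMode μ K u := by
  -- finiteness of fK
  have hfne : ∀ (x : X) (r : ℝ), fK μ K x r ≠ ⊤ := by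
    intro x r
    apply hfin
    have hsub : (fun y => x + r • y) '' K ⊆ {x} + r • K := by
      rintro _ ⟨k, hk, rfl⟩
      exact Set.add_mem_add rfl (Set.smul_mem_smul_set hk)
    have hsmul : Bornology.IsVonNBounded ℝ (r • K) := by
      have := hKbdd.image (r • ContinuousLinearMap.id ℝ X)
      simpa [Set.image_smul] using this
    exact ((Bornology.isVonNBounded_singleton x).add hsmul).subset hsub
  -- positivity of fK at u for r > 0
  have hfpos : ∀ r : ℝ, 0 < r → fK μ K u r ≠ 0 := by
    intro r hr
    rw [fK_eq μ K u hr.ne']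
    have hmemu : u ∈ (fun y => r⁻¹ • (y - u)) ⁻¹' K := by
      simp [hK0]
    exact (hu _ (hKopen.preimage (cont_aux u)) hmemu).ne'
  -- the supremum over the dense family equals the global supremum
  have hsup_eq : ∀ r : ℝ, 0 < r →
      (⨆ v ∈ E, fK μ K (u - v) r) = ⨆ z : X, fK μ K z r := by
    intro r hr
    refine le_antisymm (iSup₂_le fun v _ => le_iSup (fun z => fK μ K z r) (u - v)) ?_
    refine iSup_le fun z => ?_
    obtain ⟨v, hvE, hvlim⟩ := mem_closure_iff_seq_limit.1 (hE (u - z))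
    have hwz : Tendsto (fun n => u - v n) atTop (𝓝 z) := by
      have : Tendsto (fun n => u - v n) atTop (𝓝 (u - (u - z))) :=
        tendsto_const_nhds.sub hvlim
      simpa using this
    refine le_trans (fK_le_liminf μ hKopen hr.ne' hwz) ?_
    refine le_trans liminf_le_limsup ?_
    refine limsup_le_of_le (by isBoundedDefault) ?_
    exact Filter.Eventually.of_forall fun n => le_iSup₂ (f := fun w _ => fK μ K (u - w) r) (v n) (hvE n)
  -- the ratio is eventually at least one
  have hone : ∀ᶠ r in 𝓝[>] (0:ℝ),
      (1:ℝ≥0∞) ≤ (⨆ z : X, fK μ K z r) / fK μ K u r := by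
    filter_upwards [self_mem_nhdsWithin] with r hr
    calc (1:ℝ≥0∞) = fK μ K u r / fK μ K u r :=
          (ENNReal.div_self (hfpos r hr) (hfne u r)).symm
      _ ≤ _ := ENNReal.div_le_div_right (le_iSup (fun z => fK μ K z r) u) _
  constructor
  · rintro ⟨-, hweak⟩
    obtain ⟨v, hvE, rs, ⟨hrs0, -⟩, heq⟩ := hunif
    have hev : ∀ᶠ r in 𝓝[>] (0:ℝ),
        (⨆ z : X, fK μ K z r) / fK μ K u r = fK μ K (u - v) r / fK μ K u r := by
      filter_upwards [Ioo_mem_nhdsGT_of_mem (Set.mem_Ico.2 ⟨le_refl (0:ℝ), hrs0⟩)] with r hr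
      rw [← hsup_eq r hr.1, ← heq r hr]
    have hls : limsup (fun r : ℝ => (⨆ z : X, fK μ K z r) / fK μ K u r) (𝓝[>] (0:ℝ)) ≤ 1 := by
      rw [limsup_congr hev]
      exact hweak v hvE
    exact tendsto_of_le_liminf_of_limsup_le (le_liminf_of_le (by isBoundedDefault) hone) hls
  · intro hstrong
    refine ⟨hu, fun v hv => ?_⟩
    have hls := hstrong.limsup_eq
    refine le_trans (limsup_le_limsup ?_) hls.le
    exact Filter.Eventually.of_forall fun r =>
      ENNReal.div_le_div_right (le_iSup (fun z => fK μ K z r) (u - v)) _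
end

section
/- Let X be a first countable Hausdorff real topological vector space, μ a nonzero Borel measure on X that is finite on bounded sets, and K a bounded open neighbourhood of the origin. If E ⊆ X is topologically dense in X, then for every x ∈ X and every r > 0, sup_{z∈X} f(z,r) = sup_{z∈x−E} f(z,r) (the suprema taken in [0,∞]). -/
open MeasureTheory Filter Set Topology
open scoped ENNReal NNReal

/-- Proposition 3.4. If `E` is topologically dense in `X`, then for
every `x ∈ X` and `r > 0`, `sup_{z ∈ X} f(z,r) = sup_{z ∈ x − E} f(z,r)`. -/
theorem iSup_eq_biSup_of_dense
    {X : Type*} [AddCommGroup X] [Module ℝ X] [TopologicalSpace X]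
    [IsTopologicalAddGroup X] [ContinuousSMul ℝ X] [T2Space X]
    [FirstCountableTopology X] [MeasurableSpace X] [BorelSpace X]
    (μ : Measure X) (hμ : μ ≠ 0)
    (hfin : ∀ s : Set X, Bornology.IsVonNBounded ℝ s → μ s ≠ ⊤)
    (K : Set X) (hKopen : IsOpen K) (hK0 : (0:X) ∈ K)
    (hKbdd : Bornology.IsVonNBounded ℝ K)
    (E : Set X) (hE : Dense E) (x : X) (r : ℝ) (hr : 0 < r) :
    (⨆ z : X, fK μ K z r) = ⨆ v ∈ E, fK μ K (x - v) r := by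
  refine le_antisymm (iSup_le fun z => ?_) (iSup₂_le fun v _ => le_iSup (fun z => fK μ K z r) (x - v))
  obtain ⟨b, hb⟩ := (𝓝 (0:X)).exists_antitone_basis
  set s : ℕ → Set X := fun n => {y | ∀ ξ ∈ b n, ξ + y ∈ K} with hs
  have hmono : Monotone s := fun m n hmn y hy ξ hξ => hy ξ (hb.antitone hmn hξ)
  have hKeq : K = ⋃ n, s n := by
    ext y
    constructor
    · intro hy
      have h1 : {ξ : X | ξ + y ∈ K} ∈ 𝓝 (0:X) := by
        have hc : ContinuousAt (fun ξ : X => ξ + y) 0 :=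
          (continuous_id.add continuous_const).continuousAt
        exact hc.preimage_mem_nhds (hKopen.mem_nhds (show (0:X) + y ∈ K by simpa))
      obtain ⟨n, -, hn⟩ := hb.toHasBasis.mem_iff.mp h1
      exact mem_iUnion.mpr ⟨n, fun ξ hξ => hn hξ⟩
    · rintro hy
      obtain ⟨n, hn⟩ := mem_iUnion.mp hy
      simpa using hn 0 (mem_of_mem_nhds (hb.mem n))
  have key : fK μ K z r = ⨆ n, μ ((fun y => z + r • y) '' s n) := by
    rw [fK, hKeq, image_iUnion]
    exact Directed.measure_iUnion (Monotone.directed_le fun m n h => image_mono (hmono h))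
  rw [key]
  refine iSup_le fun n => ?_
  -- find v ∈ E with x - v = z - r • ξ, ξ ∈ b n
  have hUopen : IsOpen ((fun ξ : X => x - (z - r • ξ)) '' interior (b n)) := by
    have hhom : IsOpenMap fun ξ : X => x - (z - r • ξ) := by
      have h1 : IsOpenMap fun ξ : X => r • ξ :=
        (Homeomorph.smulOfNeZero (r : ℝ) hr.ne').isOpenMap
      have h2 : IsOpenMap fun w : X => x - (z - w) := by
        have : (fun w : X => x - (z - w)) = fun w => w + (x - z) := by
          ext w; abel
        rw [this]
        exact isOpenMap_add_right _
      exact h2.comp h1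
    exact hhom _ isOpen_interior
  obtain ⟨v, hvE, ξ, hξ, hveq⟩ :
      ∃ v ∈ E, ∃ ξ ∈ interior (b n), x - (z - r • ξ) = v := by
    have hne : ((fun ξ : X => x - (z - r • ξ)) '' interior (b n)).Nonempty :=
      ⟨_, mem_image_of_mem _ (mem_interior_iff_mem_nhds.mpr (hb.mem n))⟩
    obtain ⟨v, hv1, hv2⟩ := hE.inter_open_nonempty _ hUopen hne
    obtain ⟨ξ, hξ, hveq⟩ := hv1
    exact ⟨v, hv2, ξ, hξ, hveq⟩
  have hξn : ξ ∈ b n := interior_subset hξ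
  have hxv : x - v = z - r • ξ := by rw [← hveq]; abel
  refine le_trans ?_ (le_iSup₂ (f := fun v _ => fK μ K (x - v) r) v hvE)
  rw [fK, hxv]
  refine measure_mono ?_
  rintro _ ⟨y, hy, rfl⟩
  refine ⟨ξ + y, hy ξ hξn, ?_⟩
  show z - r • ξ + r • (ξ + y) = z + r • y
  rw [smul_add]
  abel
end

section
/- Let X be a first countable Hausdorff real topological vector space, μ a nonzero Borel measure on X that is finite on bounded sets, and K a bounded open neighbourhood of the origin. Let u ∈ supp(μ) and let E ⊆ X be nonempty. If E contains the origin, or if E is topologically dense in some neighbourhood of the origin, then 1 ≤ lim_{r↓0} (sup_{z∈u−E} f(z,r)) / f(u,r). -/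
open MeasureTheory Filter Set Topology
open scoped ENNReal NNReal
open scoped Pointwise

/-- Proposition 3.6. If `E` contains the origin or is topologically
dense in some neighbourhood of the origin, then
`1 ≤ lim_{r↓0} (sup_{z ∈ u−E} f(z,r))/f(u,r)`. -/
theorem one_le_limiting_ratio
    {X : Type*} [AddCommGroup X] [Module ℝ X] [TopologicalSpace X]
    [IsTopologicalAddGroup X] [ContinuousSMul ℝ X] [T2Space X]
    [FirstCountableTopology X] [MeasurableSpace X] [BorelSpace X]
    (μ : Measure X) (hμ : μ ≠ 0)
    (hfin : ∀ s : Set X, Bornology.IsVonNBounded ℝ s → μ s ≠ ⊤)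
    (K : Set X) (hKopen : IsOpen K) (hK0 : (0:X) ∈ K)
    (hKbdd : Bornology.IsVonNBounded ℝ K)
    (u : X) (hu : u ∈ measSupport μ) (E : Set X) (hE : E.Nonempty)
    (hE' : (0:X) ∈ E ∨ ∃ V ∈ 𝓝 (0:X), V ⊆ closure E) :
    1 ≤ limsup (fun r : ℝ => (⨆ v ∈ E, fK μ K (u - v) r) / fK μ K u r) (𝓝[>] (0:ℝ)) := by
  -- 0 is in the closure of E
  have h0cl : (0:X) ∈ closure E := by
    rcases hE' with h | ⟨V, hV, hVE⟩
    · exact subset_closure h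
    · exact hVE (mem_of_mem_nhds hV)
  obtain ⟨v, hvE, hv0⟩ := mem_closure_iff_seq_limit.mp h0cl
  -- boundedness of translated scaled copies
  have hbdd : ∀ (x : X) (r : ℝ), Bornology.IsVonNBounded ℝ ((fun y => x + r • y) '' K) := by
    intro x r
    have h1 : Bornology.IsVonNBounded ℝ ((r • ContinuousLinearMap.id ℝ X) '' K) :=
      hKbdd.image (r • ContinuousLinearMap.id ℝ X)
    have h2 := (Bornology.isVonNBounded_singleton (𝕜 := ℝ) (E := X) x).add h1
    have heq : (fun y => x + r • y) '' K = ({x} : Set X) + ⇑(r • ContinuousLinearMap.id ℝ X) '' K := by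
      rw [Set.singleton_add]
      simp only [ContinuousLinearMap.coe_smul', ContinuousLinearMap.coe_id', Pi.smul_apply,
        id_eq, ← Set.image_image]
    rw [heq]; exact h2
  -- openness
  have hopen : ∀ (x : X) (r : ℝ), r ≠ 0 → IsOpen ((fun y => x + r • y) '' K) := by
    intro x r hr
    have : IsOpenMap (fun y : X => x + r • y) :=
      (Homeomorph.addLeft x).isOpenMap.comp (isOpenMap_smul₀ hr)
    exact this K hKopen
  -- membership
  have hmem : ∀ (x : X) (r : ℝ), x ∈ (fun y => x + r • y) '' K :=
    fun x r => ⟨0, hK0, by simp⟩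
  -- pointwise bound
  have key : ∀ r : ℝ, r ∈ Set.Ioi (0:ℝ) →
      (1:ℝ≥0∞) ≤ (⨆ w ∈ E, fK μ K (u - w) r) / fK μ K u r := by
    intro r hr
    have hrne : r ≠ 0 := ne_of_gt hr
    have hfpos : 0 < fK μ K u r := hu _ (hopen u r hrne) (hmem u r)
    have hffin : fK μ K u r ≠ ⊤ := hfin _ (hbdd u r)
    have hle : fK μ K u r ≤ ⨆ w ∈ E, fK μ K (u - w) r := by
      set A : ℕ → Set X := fun n => (fun y => (u - v n) + r • y) '' K with hA
      set B : ℕ → Set X := fun n => ⋂ m ∈ Set.Ici n, A m with hB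
      have hBmono : Monotone B := fun n m hnm =>
        Set.biInter_subset_biInter_left (fun k hk => le_trans hnm hk)
      have hsub : (fun y => u + r • y) '' K ⊆ ⋃ n, B n := by
        rintro _ ⟨k, hk, rfl⟩
        have hg : Tendsto (fun m => k + r⁻¹ • v m) atTop (𝓝 k) := by
          have := (hv0.const_smul r⁻¹).const_add k
          simpa using this
        have hev : ∀ᶠ m in atTop, k + r⁻¹ • v m ∈ K :=
          hg.eventually (hKopen.mem_nhds hk)
        obtain ⟨n, hn⟩ := eventually_atTop.mp hev
        refine Set.mem_iUnion.mpr ⟨n, ?_⟩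
        refine Set.mem_biInter fun m hm => ⟨k + r⁻¹ • v m, hn m hm, ?_⟩
        have : r • (k + r⁻¹ • v m) = r • k + v m := by
          rw [smul_add, smul_smul, mul_inv_cancel₀ hrne, one_smul]
        show u - v m + r • (k + r⁻¹ • v m) = u + r • k
        rw [this]; abel
      calc fK μ K u r = μ ((fun y => u + r • y) '' K) := rfl
        _ ≤ μ (⋃ n, B n) := measure_mono hsub
        _ = ⨆ n, μ (B n) := hBmono.measure_iUnion
        _ ≤ ⨆ n, μ (A n) := iSup_mono fun n =>
            measure_mono (Set.biInter_subset_of_mem (Set.mem_Ici.mpr le_rfl))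
        _ ≤ ⨆ w ∈ E, fK μ K (u - w) r := by
            refine iSup_le fun n => ?_
            exact le_iSup₂_of_le (v n) (hvE n) le_rfl
    rw [ENNReal.le_div_iff_mul_le (Or.inl (ne_of_gt hfpos)) (Or.inl hffin), one_mul]
    exact hle
  exact le_limsup_of_frequently_le' ((eventually_mem_nhdsWithin.mono key).frequently)
end

section
/- Let X be a first countable Hausdorff real topological vector space, μ a nonzero Borel measure on X that is finite on bounded sets, and K a bounded open neighbourhood of the origin. Let E ⊆ X be topologically dense in X and let u ∈ supp(μ) be an E-strong mode of μ. Then u is a strong mode of μ if and only if the coincident limiting ratios condition holds for u and E: lim_{r↓0} (sup_{z∈u−E} f(z,r)) / f(u,r) = lim_{r↓0} (sup_{z∈X} f(z,r)) / f(u,r). -/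
open MeasureTheory Filter Set Topology
open scoped ENNReal NNReal

section AuxLemmas

open scoped Pointwise

variable {X : Type*} [AddCommGroup X] [Module ℝ X] [TopologicalSpace X]
    [IsTopologicalAddGroup X] [ContinuousSMul ℝ X]
    [MeasurableSpace X] [BorelSpace X]
    {μ : Measure X} {K : Set X}

omit [IsTopologicalAddGroup X] [ContinuousSMul ℝ X] [BorelSpace X] in
lemma fK_image_eq (x : X) (r : ℝ) :
    (fun y => x + r • y) '' K = (fun z => x + z) '' (r • K) := by
  rw [← Set.image_smul, Set.image_image]

omit [BorelSpace X] in
lemma isOpen_fK_set (hKopen : IsOpen K) {r : ℝ} (hr : r ≠ 0) (x : X) :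
    IsOpen ((fun y => x + r • y) '' K) := by
  rw [fK_image_eq]
  exact (isOpenMap_add_left x) _ (hKopen.smul₀ hr)

omit [BorelSpace X] in
lemma isVonNBounded_fK_set (hKbdd : Bornology.IsVonNBounded ℝ K) (x : X) (r : ℝ) :
    Bornology.IsVonNBounded ℝ ((fun y => x + r • y) '' K) := by
  rw [fK_image_eq]
  have h1 : Bornology.IsVonNBounded ℝ (r • K) := by
    have := hKbdd.image (σ := RingHom.id ℝ) (r • (ContinuousLinearMap.id ℝ X))
    simpa [Set.image_smul] using this
  have := h1.vadd x
  simpa [← Set.image_vadd, vadd_eq_add] using this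

omit [BorelSpace X] in
/-- positivity of `fK` at a support point -/
lemma fK_pos (hKopen : IsOpen K) (hK0 : (0:X) ∈ K) {u : X} (hu : u ∈ measSupport μ)
    {r : ℝ} (hr : 0 < r) : 0 < fK μ K u r := by
  refine hu _ (isOpen_fK_set hKopen hr.ne' u) ?_
  exact ⟨0, hK0, by simp⟩

/-- density lemma: `fK μ K u r ≤ ⨆ v ∈ E, fK μ K (u - v) r` for dense `E`. -/
lemma fK_le_biSup_dense [FirstCountableTopology X]
    (hKopen : IsOpen K) {E : Set X} (hE : Dense E) (u : X) {r : ℝ} (hr : 0 < r) :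
    fK μ K u r ≤ ⨆ v ∈ E, fK μ K (u - v) r := by
  -- choose a sequence in E tending to 0
  obtain ⟨v, hvE, hvlim⟩ := mem_closure_iff_seq_limit.1 (hE (0 : X))
  set s : ℕ → Set X := fun n => (fun y => (u - v n) + r • y) '' K with hs
  set T : ℕ → Set X := fun n => ⋂ (m : ℕ) (_ : n ≤ m), s m with hT
  have hTmono : Monotone T := by
    intro a b hab
    exact Set.iInter₂_mono' fun m hm => ⟨m, hab.trans hm, le_rfl⟩
  have hsub : (fun y => u + r • y) '' K ⊆ ⋃ n, T n := by
    rintro x ⟨k, hk, rfl⟩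
    have htend : Tendsto (fun n => k + r⁻¹ • v n) atTop (𝓝 k) := by
      have : Tendsto (fun n => r⁻¹ • v n) atTop (𝓝 (r⁻¹ • (0:X))) :=
        hvlim.const_smul _
      simpa using tendsto_const_nhds.add this
    have hev : ∀ᶠ n in atTop, k + r⁻¹ • v n ∈ K :=
      htend.eventually (hKopen.mem_nhds hk)
    obtain ⟨N, hN⟩ := eventually_atTop.1 hev
    refine Set.mem_iUnion.2 ⟨N, ?_⟩
    refine Set.mem_iInter₂.2 fun m hm => ⟨k + r⁻¹ • v m, hN m hm, ?_⟩
    have h2 : r • (r⁻¹ • v m) = v m := smul_inv_smul₀ hr.ne' (v m)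
    show u - v m + r • (k + r⁻¹ • v m) = u + r • k
    rw [smul_add, h2]
    abel
  have hmeas : ∀ n, MeasurableSet (T n) := by
    intro n
    exact MeasurableSet.iInter fun m => MeasurableSet.iInter fun _ =>
      (isOpen_fK_set hKopen hr.ne' _).measurableSet
  calc fK μ K u r ≤ μ (⋃ n, T n) := measure_mono hsub
    _ = ⨆ n, μ (T n) := (hTmono.directed_le).measure_iUnion
    _ ≤ ⨆ n, fK μ K (u - v n) r := by
        refine iSup_mono fun n => measure_mono ?_
        exact Set.iInter₂_subset n le_rfl
    _ ≤ ⨆ w ∈ E, fK μ K (u - w) r := by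
        refine iSup_le fun n => ?_
        exact le_iSup₂ (f := fun w (_ : w ∈ E) => fK μ K (u - w) r) (v n) (hvE n)

end AuxLemmas

/-- Corollary 3.7. Let `E` be topologically dense in `X` and let
`u ∈ supp(μ)` be an `E`-strong mode. Then `u` is a strong mode if and only if the
coincident limiting ratios condition holds for `u` and `E`. -/
theorem strong_iff_CLR_of_dense_of_Estrong
    {X : Type*} [AddCommGroup X] [Module ℝ X] [TopologicalSpace X]
    [IsTopologicalAddGroup X] [ContinuousSMul ℝ X] [T2Space X]
    [FirstCountableTopology X] [MeasurableSpace X] [BorelSpace X]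
    (μ : Measure X) (hμ : μ ≠ 0)
    (hfin : ∀ s : Set X, Bornology.IsVonNBounded ℝ s → μ s ≠ ⊤)
    (K : Set X) (hKopen : IsOpen K) (hK0 : (0:X) ∈ K)
    (hKbdd : Bornology.IsVonNBounded ℝ K)
    (E : Set X) (hE : Dense E) (u : X) (hu : u ∈ measSupport μ)
    (hEstrong : IsEStrongMode μ K E u) :
    IsStrongMode μ K u ↔ CLRCondition μ K E u := by
  set gE : ℝ → ℝ≥0∞ := fun r => (⨆ v ∈ E, fK μ K (u - v) r) / fK μ K u r with hgE
  set g : ℝ → ℝ≥0∞ := fun r => (⨆ z : X, fK μ K z r) / fK μ K u r with hg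
  have hpos : ∀ r : ℝ, 0 < r → 0 < fK μ K u r := fun r hr => fK_pos hKopen hK0 hu hr
  have hfin' : ∀ r : ℝ, fK μ K u r ≠ ⊤ := fun r =>
    hfin _ (isVonNBounded_fK_set hKbdd u r)
  -- 1 ≤ gE r ≤ g r for r > 0
  have hone_gE : ∀ r : ℝ, 0 < r → 1 ≤ gE r := by
    intro r hr
    rw [hgE, ENNReal.le_div_iff_mul_le (Or.inl (hpos r hr).ne') (Or.inl (hfin' r)), one_mul]
    exact fK_le_biSup_dense hKopen hE u hr
  have hgE_le_g : ∀ r : ℝ, gE r ≤ g r := by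
    intro r
    refine ENNReal.div_le_div_right ?_ _
    exact iSup_le fun v => iSup_le fun _ => le_iSup (fun z => fK μ K z r) (u - v)
  have hev_pos : ∀ᶠ r in 𝓝[>] (0:ℝ), 0 < r := self_mem_nhdsWithin
  have hev_one_g : ∀ᶠ r in 𝓝[>] (0:ℝ), 1 ≤ g r :=
    hev_pos.mono fun r hr => (hone_gE r hr).trans (hgE_le_g r)
  have hev_one_gE : ∀ᶠ r in 𝓝[>] (0:ℝ), 1 ≤ gE r :=
    hev_pos.mono fun r hr => hone_gE r hr
  have hliminf_g : 1 ≤ liminf g (𝓝[>] (0:ℝ)) := le_liminf_of_le (by isBoundedDefault) hev_one_g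
  have hliminf_gE : 1 ≤ liminf gE (𝓝[>] (0:ℝ)) := le_liminf_of_le (by isBoundedDefault) hev_one_gE
  constructor
  · intro hstrong
    have hlimg : limsup g (𝓝[>] (0:ℝ)) = 1 := hstrong.limsup_eq
    have h1 : limsup gE (𝓝[>] (0:ℝ)) ≤ limsup g (𝓝[>] (0:ℝ)) :=
      limsup_le_limsup (Eventually.of_forall hgE_le_g)
    have h2 : 1 ≤ limsup gE (𝓝[>] (0:ℝ)) :=
      hliminf_gE.trans (liminf_le_limsup)
    unfold CLRCondition
    rw [← hgE, ← hg, hlimg]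
    exact le_antisymm (h1.trans_eq hlimg) h2
  · intro hCLR
    have hlimsup_g : limsup g (𝓝[>] (0:ℝ)) ≤ 1 := by
      have := hCLR
      unfold CLRCondition at this
      rw [← hgE, ← hg] at this
      rw [← this]
      exact hEstrong.2
    have heq : liminf g (𝓝[>] (0:ℝ)) = limsup g (𝓝[>] (0:ℝ)) :=
      le_antisymm liminf_le_limsup (hlimsup_g.trans hliminf_g)
    have h1 : limsup g (𝓝[>] (0:ℝ)) = 1 :=
      le_antisymm hlimsup_g (hliminf_g.trans liminf_le_limsup)
    exact tendsto_of_liminf_eq_limsup (heq.trans h1) h1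
end

section
/- Let X = ℝⁿ, let E be a topologically dense proper subset of X, let K be the open unit ℓ_p-ball centred at the origin for some 0 < p ≤ ∞, and let μ be a Borel measure on X that admits a continuous density g with respect to Lebesgue measure. If u is an E-weak mode of μ and g(u) > 0, then u is a strong mode of μ. -/
open MeasureTheory Filter Set Topology
open scoped ENNReal NNReal

/-- The open unit ℓ_p-ball in `ℝⁿ` centred at the origin, `0 < p ≤ ∞`. -/
noncomputable def lpUnitBall (n : ℕ) (p : ℝ≥0∞) : Set (Fin n → ℝ) :=
  if p = ⊤ then {x | ∀ i, |x i| < 1} else {x | (∑ i, |x i| ^ p.toReal) < 1}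


section AuxLemmas

open Pointwise

variable {n : ℕ} {p : ℝ≥0∞}

lemma lpUnitBall_isOpen (hp : 0 < p) : IsOpen (lpUnitBall n p) := by
  unfold lpUnitBall
  split_ifs with h
  · have : {x : Fin n → ℝ | ∀ i, |x i| < 1} = ⋂ i, {x | |x i| < 1} := by
      ext x; simp
    rw [this]
    exact isOpen_iInter_of_finite fun i =>
      (isOpen_Iio.preimage (continuous_abs.comp (continuous_apply i)))
  · have ht : 0 ≤ p.toReal := ENNReal.toReal_nonneg
    have hc : Continuous fun x : Fin n → ℝ => ∑ i, |x i| ^ p.toReal := by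
      apply continuous_finset_sum
      intro i _
      apply Continuous.rpow_const (continuous_abs.comp (continuous_apply i))
      intro x; right; exact ht
    exact isOpen_Iio.preimage hc

lemma zero_mem_lpUnitBall (hp : 0 < p) : (0 : Fin n → ℝ) ∈ lpUnitBall n p := by
  unfold lpUnitBall
  split_ifs with h
  · intro i; simp
  · have ht : 0 < p.toReal := ENNReal.toReal_pos hp.ne' h
    simp [Real.zero_rpow ht.ne']

lemma lpUnitBall_subset (hp : 0 < p) : lpUnitBall n p ⊆ Metric.ball (0 : Fin n → ℝ) 1 := by
  intro x hx
  rw [mem_ball_zero_iff]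
  rw [pi_norm_lt_iff one_pos]
  intro i
  rw [Real.norm_eq_abs]
  unfold lpUnitBall at hx
  split_ifs at hx with h
  · exact hx i
  · have ht : 0 < p.toReal := ENNReal.toReal_pos hp.ne' h
    by_contra hge
    push_neg at hge
    have h1 : (1:ℝ) ≤ |x i| ^ p.toReal := Real.one_le_rpow hge ht.le
    have h2 : |x i| ^ p.toReal ≤ ∑ j, |x j| ^ p.toReal :=
      Finset.single_le_sum (fun j _ => Real.rpow_nonneg (abs_nonneg _) _) (Finset.mem_univ i)
    have hx' : ∑ j, |x j| ^ p.toReal < 1 := hx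
    linarith

lemma lpUnitBall_vol_pos (hp : 0 < p) : 0 < volume (lpUnitBall n p) :=
  (lpUnitBall_isOpen hp).measure_pos volume ⟨0, zero_mem_lpUnitBall hp⟩

lemma lpUnitBall_vol_lt_top (hp : 0 < p) : volume (lpUnitBall n p) < ⊤ :=
  lt_of_le_of_lt (measure_mono (lpUnitBall_subset hp))
    ((isCompact_closedBall _ _).measure_lt_top.trans_le'
      (measure_mono Metric.ball_subset_closedBall))

lemma image_vol (x : Fin n → ℝ) {r : ℝ} (hr : 0 < r) (K : Set (Fin n → ℝ)) :
    volume ((fun y => x + r • y) '' K) = ENNReal.ofReal (r ^ n) * volume K := by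
  have himg : (fun y => x + r • y) '' K = x +ᵥ r • K := by
    ext y
    simp only [Set.mem_image, Set.mem_vadd_set, Set.mem_smul_set]
    constructor
    · rintro ⟨k, hk, rfl⟩; exact ⟨r • k, ⟨k, hk, rfl⟩, rfl⟩
    · rintro ⟨w, ⟨k, hk, rfl⟩, rfl⟩; exact ⟨k, hk, rfl⟩
  rw [himg, measure_vadd (μ := volume), Measure.addHaar_smul]
  congr 2
  rw [abs_of_nonneg (pow_nonneg hr.le _)]
  congr 1
  simp

lemma image_isOpen {K : Set (Fin n → ℝ)} (hK : IsOpen K) (x : Fin n → ℝ) {r : ℝ} (hr : r ≠ 0) :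
    IsOpen ((fun y => x + r • y) '' K) := by
  have : (fun y => x + r • y) '' K = (fun y => r⁻¹ • (y - x)) ⁻¹' K := by
    ext y
    simp only [Set.mem_image, Set.mem_preimage]
    constructor
    · rintro ⟨k, hk, rfl⟩
      simpa [add_sub_cancel_left, smul_smul, inv_mul_cancel₀ hr] using hk
    · intro hk
      exact ⟨r⁻¹ • (y - x), hk, by simp [smul_smul, mul_inv_cancel₀ hr]⟩
  rw [this]
  exact hK.preimage (by continuity)

lemma image_subset_ball {K : Set (Fin n → ℝ)} (hK : K ⊆ Metric.ball 0 1) (x : Fin n → ℝ)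
    {r : ℝ} (hr : 0 < r) : (fun y => x + r • y) '' K ⊆ Metric.ball x r := by
  rintro _ ⟨k, hk, rfl⟩
  rw [Metric.mem_ball, dist_eq_norm]
  have : x + r • k - x = r • k := by abel
  rw [this, norm_smul, Real.norm_eq_abs, abs_of_pos hr]
  have hk1 : ‖k‖ < 1 := mem_ball_zero_iff.mp (hK hk)
  calc r * ‖k‖ < r * 1 := by
        rcases eq_or_lt_of_le (norm_nonneg k) with h0 | h0
        · rw [← h0]; simpa using hr
        · exact (mul_lt_mul_iff_right₀ hr).mpr hk1
    _ = r := mul_one r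

lemma fK_div_tendsto {g : (Fin n → ℝ) → ℝ} (hg : Continuous g) (hg0 : ∀ x, 0 ≤ g x)
    (hp : 0 < p) (x : Fin n → ℝ) :
    Tendsto (fun r : ℝ => fK (volume.withDensity (fun y => ENNReal.ofReal (g y)))
        (lpUnitBall n p) x r / (ENNReal.ofReal (r ^ n) * volume (lpUnitBall n p)))
      (𝓝[>] (0:ℝ)) (𝓝 (ENNReal.ofReal (g x))) := by
  set K := lpUnitBall n p with hKdef
  have hKopen : IsOpen K := lpUnitBall_isOpen hp
  have hKball : K ⊆ Metric.ball 0 1 := lpUnitBall_subset hp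
  have hvolpos : 0 < volume K := lpUnitBall_vol_pos hp
  have hvoltop : volume K < ⊤ := lpUnitBall_vol_lt_top hp
  rw [ENNReal.tendsto_nhds ENNReal.ofReal_ne_top]
  intro ε hε
  have hmin : (0:ℝ≥0∞) < min ε 1 := lt_min hε zero_lt_one
  have hminne : min ε 1 ≠ ⊤ := ne_top_of_le_ne_top ENNReal.one_ne_top (min_le_right _ _)
  set e := (min ε 1).toReal with hedef
  have he : 0 < e := ENNReal.toReal_pos hmin.ne' hminne
  have hofe : ENNReal.ofReal e ≤ ε := by
    rw [hedef, ENNReal.ofReal_toReal hminne]; exact min_le_left _ _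
  obtain ⟨δ, hδ, hδg⟩ := Metric.continuousAt_iff.mp hg.continuousAt (ε := e) he
  filter_upwards [Ioo_mem_nhdsGT_of_mem (Set.left_mem_Ico.mpr hδ)] with r hr
  obtain ⟨hr0, hrδ⟩ := hr
  set S := (fun y => x + r • y) '' K with hSdef
  have hSopen : IsOpen S := image_isOpen hKopen x hr0.ne'
  have hSball : S ⊆ Metric.ball x δ :=
    (image_subset_ball hKball x hr0).trans (Metric.ball_subset_ball hrδ.le)
  have hSg : ∀ y ∈ S, g x - e ≤ g y ∧ g y ≤ g x + e := by
    intro y hy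
    have := hδg (Metric.mem_ball.mp (hSball hy))
    rw [Real.dist_eq] at this
    constructor <;> cases abs_lt.mp this <;> linarith
  have hvolS : volume S = ENNReal.ofReal (r ^ n) * volume K := image_vol x hr0 K
  have hDne : ENNReal.ofReal (r ^ n) * volume K ≠ 0 := by
    apply mul_ne_zero _ hvolpos.ne'
    simpa using pow_pos hr0 n
  have hDtop : ENNReal.ofReal (r ^ n) * volume K ≠ ⊤ :=
    (ENNReal.mul_lt_top ENNReal.ofReal_lt_top hvoltop).ne
  have hμS : fK (volume.withDensity (fun y => ENNReal.ofReal (g y))) K x r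
      = ∫⁻ y in S, ENNReal.ofReal (g y) := by
    rw [fK, withDensity_apply _ hSopen.measurableSet]
  have hupper : fK (volume.withDensity (fun y => ENNReal.ofReal (g y))) K x r
      ≤ ENNReal.ofReal (g x + e) * (ENNReal.ofReal (r ^ n) * volume K) := by
    rw [hμS, ← hvolS, ← setLIntegral_const S (ENNReal.ofReal (g x + e))]
    exact setLIntegral_mono measurable_const fun y hy =>
      ENNReal.ofReal_le_ofReal (hSg y hy).2
  have hlower : ENNReal.ofReal (g x - e) * (ENNReal.ofReal (r ^ n) * volume K)
      ≤ fK (volume.withDensity (fun y => ENNReal.ofReal (g y))) K x r := by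
    rw [hμS, ← hvolS, ← setLIntegral_const S (ENNReal.ofReal (g x - e))]
    exact setLIntegral_mono (hg.measurable.ennreal_ofReal) fun y hy =>
      ENNReal.ofReal_le_ofReal (hSg y hy).1
  constructor
  · calc ENNReal.ofReal (g x) - ε ≤ ENNReal.ofReal (g x) - ENNReal.ofReal e :=
          tsub_le_tsub_left hofe _
      _ = ENNReal.ofReal (g x - e) := (ENNReal.ofReal_sub _ he.le).symm
      _ ≤ _ := (ENNReal.le_div_iff_mul_le (Or.inl hDne) (Or.inl hDtop)).mpr hlower
  · calc fK _ K x r / (ENNReal.ofReal (r ^ n) * volume K)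
        ≤ ENNReal.ofReal (g x + e) := by
          rw [ENNReal.div_le_iff hDne hDtop]; exact hupper
      _ = ENNReal.ofReal (g x) + ENNReal.ofReal e := ENNReal.ofReal_add (hg0 x) he.le
      _ ≤ ENNReal.ofReal (g x) + ε := add_le_add_right hofe _

lemma myDivDiv (a b D : ℝ≥0∞) (h0 : D ≠ 0) (ht : D ≠ ⊤) : (a / D) / (b / D) = a / b := by
  rw [div_eq_mul_inv a D, div_eq_mul_inv b D, div_eq_mul_inv,
    ENNReal.mul_inv (Or.inr (ENNReal.inv_ne_top.mpr h0)) (Or.inr (ENNReal.inv_ne_zero.mpr ht)),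
    inv_inv]
  calc a * D⁻¹ * (b⁻¹ * D) = a * b⁻¹ * (D⁻¹ * D) := by ring
    _ = a * b⁻¹ := by rw [ENNReal.inv_mul_cancel h0 ht, mul_one]
    _ = a / b := (div_eq_mul_inv a b).symm

end AuxLemmas

/-- Proposition 4.1. Let `X = ℝⁿ`, let `E` be a topologically dense
proper subset of `X`, let `K` be the open unit ℓ_p-ball for some `0 < p ≤ ∞`, and let `μ`
admit a continuous density `g` w.r.t. Lebesgue measure. If `u` is an `E`-weak mode of `μ`
and `g(u) > 0`, then `u` is a strong mode of `μ`. -/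
theorem strong_of_Eweak_finite_dim
    {n : ℕ} (p : ℝ≥0∞) (hp : 0 < p)
    (g : (Fin n → ℝ) → ℝ) (hg : Continuous g) (hg0 : ∀ x, 0 ≤ g x)
    (μ : Measure (Fin n → ℝ))
    (hμ : μ = volume.withDensity (fun x => ENNReal.ofReal (g x)))
    (E : Set (Fin n → ℝ)) (hE : Dense E) (hEproper : E ≠ univ)
    (u : Fin n → ℝ) (hu : IsEWeakMode μ (lpUnitBall n p) E u) (hgu : 0 < g u) :
    IsStrongMode μ (lpUnitBall n p) u := by
  subst hμ
  set μ := volume.withDensity (fun x => ENNReal.ofReal (g x)) with hμdef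
  set K := lpUnitBall n p with hKdef
  set D : ℝ → ℝ≥0∞ := fun r => ENNReal.ofReal (r ^ n) * volume K with hDdef
  have hKopen : IsOpen K := lpUnitBall_isOpen hp
  have hvolpos : 0 < volume K := lpUnitBall_vol_pos hp
  have hvoltop : volume K < ⊤ := lpUnitBall_vol_lt_top hp
  have hD0 : ∀ r : ℝ, 0 < r → D r ≠ 0 := by
    intro r hr
    apply mul_ne_zero _ hvolpos.ne'
    simpa using pow_pos hr n
  have hDt : ∀ r : ℝ, 0 < r → D r ≠ ⊤ := fun r _ =>
    (ENNReal.mul_lt_top ENNReal.ofReal_lt_top hvoltop).ne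
  have hA : ∀ x : Fin n → ℝ, Tendsto (fun r : ℝ => fK μ K x r / D r)
      (𝓝[>] (0:ℝ)) (𝓝 (ENNReal.ofReal (g x))) := fun x => fK_div_tendsto hg hg0 hp x
  have hgu0 : ENNReal.ofReal (g u) ≠ 0 := (ENNReal.ofReal_pos.mpr hgu).ne'
  -- Step 1: g (u - v) ≤ g u for v ∈ E
  have hgE : ∀ v ∈ E, g (u - v) ≤ g u := by
    intro v hv
    have hratio : Tendsto (fun r : ℝ => fK μ K (u - v) r / fK μ K u r) (𝓝[>] (0:ℝ))
        (𝓝 (ENNReal.ofReal (g (u - v)) / ENNReal.ofReal (g u))) := by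
      have hdiv := ENNReal.Tendsto.div (hA (u - v)) (Or.inr hgu0) (hA u)
        (Or.inl ENNReal.ofReal_ne_top)
      apply hdiv.congr'
      filter_upwards [self_mem_nhdsWithin] with r hr
      exact myDivDiv _ _ _ (hD0 r hr) (hDt r hr)
    have hls := hratio.limsup_eq
    have hle := hu.2 v hv
    rw [hls] at hle
    have := (ENNReal.div_le_iff hgu0 ENNReal.ofReal_ne_top).mp hle
    rw [one_mul] at this
    exact (ENNReal.ofReal_le_ofReal_iff (hg0 u)).mp this
  -- Step 2: g x ≤ g u for all x
  have hglobal : ∀ x, g x ≤ g u := by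
    intro x
    have hC : IsClosed {v : Fin n → ℝ | g (u - v) ≤ g u} :=
      isClosed_le (hg.comp (continuous_const.sub continuous_id)) continuous_const
    have hsub : closure E ⊆ {v : Fin n → ℝ | g (u - v) ≤ g u} :=
      closure_minimal (fun v hv => hgE v hv) hC
    have : u - x ∈ {v : Fin n → ℝ | g (u - v) ≤ g u} := by
      apply hsub
      rw [hE.closure_eq]
      trivial
    simpa using this
  -- Step 3: uniform upper bound on the sup
  have hsup : ∀ r : ℝ, 0 < r → (⨆ z : Fin n → ℝ, fK μ K z r) ≤ ENNReal.ofReal (g u) * D r := by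
    intro r hr
    apply iSup_le
    intro z
    rw [show fK μ K z r = ∫⁻ y in (fun y => z + r • y) '' K, ENNReal.ofReal (g y) from by
      rw [fK, hμdef, withDensity_apply _ (image_isOpen hKopen z hr.ne').measurableSet]]
    calc ∫⁻ y in (fun y => z + r • y) '' K, ENNReal.ofReal (g y)
        ≤ ∫⁻ _ in (fun y => z + r • y) '' K, ENNReal.ofReal (g u) :=
          setLIntegral_mono measurable_const fun y _ =>
            ENNReal.ofReal_le_ofReal (hglobal y)
      _ = ENNReal.ofReal (g u) * volume ((fun y => z + r • y) '' K) :=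
          setLIntegral_const _ _
      _ = ENNReal.ofReal (g u) * D r := by rw [image_vol z hr K]
  -- Step 4: sup / D tends to ofReal (g u)
  have hsupD : Tendsto (fun r : ℝ => (⨆ z : Fin n → ℝ, fK μ K z r) / D r)
      (𝓝[>] (0:ℝ)) (𝓝 (ENNReal.ofReal (g u))) := by
    apply tendsto_of_tendsto_of_tendsto_of_le_of_le' (hA u) tendsto_const_nhds
    · filter_upwards [self_mem_nhdsWithin] with r _
      exact ENNReal.div_le_div_right (le_iSup (fun z => fK μ K z r) u) _
    · filter_upwards [self_mem_nhdsWithin] with r hr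
      rw [ENNReal.div_le_iff (hD0 r hr) (hDt r hr)]
      exact hsup r hr
  -- Finish
  have hdiv := ENNReal.Tendsto.div hsupD (Or.inr hgu0) (hA u) (Or.inl ENNReal.ofReal_ne_top)
  rw [ENNReal.div_self hgu0 ENNReal.ofReal_ne_top] at hdiv
  apply hdiv.congr'
  filter_upwards [self_mem_nhdsWithin] with r hr
  exact myDivDiv _ _ _ (hD0 r hr) (hDt r hr)
end

section
/- Let X be a first countable Hausdorff real topological vector space, μ a σ-finite nonzero Borel measure on X that is finite on bounded sets, and K a bounded open neighbourhood of the origin. Let u ∈ supp(μ) and v ∈ X be such that the translated measure μ_v (defined by μ_v(A) := μ(A−v)) is absolutely continuous with respect to μ with a representative dμ_v/dμ of its Radon–Nikodym derivative that is continuous on some open neighbourhood of u, and suppose lim_{r↓0} f(u−v,r)/f(u,r) ≤ 1. Then lim_{r↓0} f(u−v,r)/f(u,r) = (dμ_v/dμ)(u). -/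
open MeasureTheory Filter Set Topology
open scoped ENNReal NNReal Pointwise

/-- Lemma 4.4. If `μ_v = μ.map (· + v)` is absolutely continuous
w.r.t. `μ` with a representative `g` of `dμ_v/dμ` continuous on an open neighbourhood
of `u ∈ supp(μ)`, and `lim_{r↓0} f(u−v,r)/f(u,r) ≤ 1`, then
`lim_{r↓0} f(u−v,r)/f(u,r) = g(u)`. -/
theorem limiting_ratio_eq_density
    {X : Type*} [AddCommGroup X] [Module ℝ X] [TopologicalSpace X]
    [IsTopologicalAddGroup X] [ContinuousSMul ℝ X] [T2Space X]
    [FirstCountableTopology X] [MeasurableSpace X] [BorelSpace X]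
    (μ : Measure X) [SigmaFinite μ] (hμ : μ ≠ 0)
    (hfin : ∀ s : Set X, Bornology.IsVonNBounded ℝ s → μ s ≠ ⊤)
    (K : Set X) (hKopen : IsOpen K) (hK0 : (0:X) ∈ K)
    (hKbdd : Bornology.IsVonNBounded ℝ K)
    (u : X) (hu : u ∈ measSupport μ) (v : X)
    (hac : μ.map (· + v) ≪ μ)
    (g : X → ℝ≥0∞) (hgmeas : Measurable g)
    (hg : μ.map (· + v) = μ.withDensity g)
    (U : Set X) (hUopen : IsOpen U) (huU : u ∈ U) (hgcont : ContinuousOn g U)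
    (hle : limsup (fun r : ℝ => fK μ K (u - v) r / fK μ K u r) (𝓝[>] (0:ℝ)) ≤ 1) :
    Tendsto (fun r : ℝ => fK μ K (u - v) r / fK μ K u r) (𝓝[>] (0:ℝ)) (𝓝 (g u)) := by
  classical
  set S : ℝ → Set X := fun r => (fun y => u + r • y) '' K with hSdef
  have hSopen : ∀ r : ℝ, r ≠ 0 → IsOpen (S r) := by
    intro r hr
    have hEq : S r = (fun y : X => u + y) '' ((fun y : X => r • y) '' K) := by
      rw [← Set.image_comp]; rfl
    rw [hEq]
    exact (Homeomorph.addLeft u).isOpenMap _ (isOpenMap_smul₀ hr _ hKopen)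
  have hSmem : ∀ r : ℝ, u ∈ S r := fun r => ⟨0, hK0, by simp⟩
  have hSpos : ∀ r : ℝ, r ≠ 0 → μ (S r) ≠ 0 :=
    fun r hr => (hu _ (hSopen r hr) (hSmem r)).ne'
  have hSfin : ∀ r : ℝ, μ (S r) ≠ ⊤ := by
    intro r
    apply hfin
    have hb : Bornology.IsVonNBounded ℝ ((fun y : X => r • y) '' K) := by
      have := hKbdd.image (σ := RingHom.id ℝ) (r • (ContinuousLinearMap.id ℝ X))
      simpa using this
    have hEq : S r = u +ᵥ ((fun y : X => r • y) '' K) := by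
      rw [← Set.image_vadd, ← Set.image_comp]; rfl
    rw [hEq]
    exact hb.vadd u
  have hfKu : ∀ r : ℝ, fK μ K u r = μ (S r) := fun r => rfl
  have hkey : ∀ r : ℝ, r ≠ 0 → fK μ K (u - v) r = ∫⁻ x in S r, g x ∂μ := by
    intro r hr
    have hmeas : MeasurableSet (S r) := (hSopen r hr).measurableSet
    have hpre : (fun y => (u - v) + r • y) '' K = (· + v) ⁻¹' (S r) := by
      ext x
      constructor
      · rintro ⟨y, hy, rfl⟩
        exact ⟨y, hy, by show u + r • y = u - v + r • y + v; rw [add_right_comm, sub_add_cancel]⟩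
      · rintro ⟨y, hy, h⟩
        refine ⟨y, hy, ?_⟩
        have hx : x = u + r • y - v := eq_sub_iff_add_eq.mpr h.symm
        rw [hx]; abel
    calc fK μ K (u - v) r = μ ((· + v) ⁻¹' (S r)) := by rw [fK, hpre]
      _ = μ.map (· + v) (S r) := (Measure.map_apply (measurable_add_const v) hmeas).symm
      _ = ∫⁻ x in S r, g x ∂μ := by rw [hg, withDensity_apply _ hmeas]
  have hWtoS : ∀ W ∈ 𝓝 u, ∀ᶠ r in 𝓝[>] (0:ℝ), S r ⊆ W := by
    intro W hW
    have hV : (fun y : X => u + y) ⁻¹' W ∈ 𝓝 (0 : X) := by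
      have hc : Continuous fun y : X => u + y := continuous_const.add continuous_id
      have := hc.continuousAt (x := (0 : X))
      simpa using this.preimage_mem_nhds (by simpa using hW)
    have habs : Absorbs ℝ ((fun y : X => u + y) ⁻¹' W) K := hKbdd hV
    have h1 := habs.eventually_nhdsNE_zero
    have h2 : 𝓝[>] (0:ℝ) ≤ 𝓝[≠] (0:ℝ) :=
      nhdsWithin_mono _ fun x hx => ne_of_gt hx
    filter_upwards [h2 h1] with r hr
    rintro x ⟨y, hy, rfl⟩
    exact hr hy
  have hcont : ContinuousAt g u := hgcont.continuousAt (hUopen.mem_nhds huU)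
  by_cases htop : g u = ⊤
  · exfalso
    have h2 : g ⁻¹' (Ioi (2:ℝ≥0∞)) ∈ 𝓝 u := by
      apply hcont
      rw [htop]
      exact Ioi_mem_nhds (by simp)
    have hfreq : ∀ᶠ r in 𝓝[>] (0:ℝ),
        (2:ℝ≥0∞) ≤ fK μ K (u - v) r / fK μ K u r := by
      filter_upwards [hWtoS _ h2, self_mem_nhdsWithin] with r hrS hr
      have hr' : r ≠ 0 := ne_of_gt hr
      rw [ENNReal.le_div_iff_mul_le (Or.inl ((hfKu r) ▸ hSpos r hr'))
        (Or.inl ((hfKu r) ▸ hSfin r)), hkey r hr', hfKu]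
      calc (2:ℝ≥0∞) * μ (S r) = ∫⁻ _ in S r, (2:ℝ≥0∞) ∂μ := (setLIntegral_const _ _).symm
        _ ≤ ∫⁻ x in S r, g x ∂μ := setLIntegral_mono hgmeas fun x hx => (hrS hx).le
    have h2le : (2:ℝ≥0∞) ≤ limsup (fun r : ℝ => fK μ K (u - v) r / fK μ K u r) (𝓝[>] (0:ℝ)) :=
      le_limsup_of_frequently_le hfreq.frequently
    have : (2:ℝ≥0∞) ≤ 1 := h2le.trans hle
    simp at this
  · rw [ENNReal.tendsto_nhds htop]
    intro ε hε
    have hIcc : Icc (g u - ε) (g u + ε) ∈ 𝓝 (g u) := ENNReal.Icc_mem_nhds htop hε.ne'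
    filter_upwards [hWtoS _ (hcont hIcc), self_mem_nhdsWithin] with r hrS hr
    have hr' : r ≠ 0 := ne_of_gt hr
    constructor
    · rw [ENNReal.le_div_iff_mul_le (Or.inl ((hfKu r) ▸ hSpos r hr'))
        (Or.inl ((hfKu r) ▸ hSfin r)), hkey r hr', hfKu]
      calc (g u - ε) * μ (S r) = ∫⁻ _ in S r, (g u - ε) ∂μ := (setLIntegral_const _ _).symm
        _ ≤ ∫⁻ x in S r, g x ∂μ := setLIntegral_mono hgmeas fun x hx => (hrS hx).1
    · rw [hkey r hr', hfKu, ENNReal.div_le_iff (hSpos r hr') (hSfin r)]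
      calc ∫⁻ x in S r, g x ∂μ ≤ ∫⁻ _ in S r, (g u + ε) ∂μ :=
            setLIntegral_mono measurable_const fun x hx => (hrS hx).2
        _ = (g u + ε) * μ (S r) := setLIntegral_const _ _
end

section
/- Let X be a first countable Hausdorff real topological vector space, μ a σ-finite nonzero Borel measure on X that is finite on bounded sets, and K a bounded open neighbourhood of the origin. Let u ∈ supp(μ), and let E be a nonempty subset of X such that for every v ∈ E the translated measure μ_v (defined by μ_v(A) := μ(A−v)) is absolutely continuous with respect to μ with a representative dμ_v/dμ of its Radon–Nikodym derivative that is continuous on some open neighbourhood of u. If u is an E-weak mode of μ, then sup_{v∈E} (dμ_v/dμ)(u) ≤ 1. -/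
open MeasureTheory Filter Set Topology
open scoped ENNReal NNReal
open scoped Pointwise

/-- Corollary 4.5. Suppose that for each `v ∈ E` the translate
`μ_v = μ.map (· + v)` is absolutely continuous w.r.t. `μ` with representative `g v` of
`dμ_v/dμ` continuous on some open neighbourhood of `u`. If `u` is an `E`-weak mode,
then `sup_{v ∈ E} (dμ_v/dμ)(u) ≤ 1`. -/
theorem sup_density_le_one_of_Eweak
    {X : Type*} [AddCommGroup X] [Module ℝ X] [TopologicalSpace X]
    [IsTopologicalAddGroup X] [ContinuousSMul ℝ X] [T2Space X]
    [FirstCountableTopology X] [MeasurableSpace X] [BorelSpace X]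
    (μ : Measure X) [SigmaFinite μ] (hμ : μ ≠ 0)
    (hfin : ∀ s : Set X, Bornology.IsVonNBounded ℝ s → μ s ≠ ⊤)
    (K : Set X) (hKopen : IsOpen K) (hK0 : (0:X) ∈ K)
    (hKbdd : Bornology.IsVonNBounded ℝ K)
    (u : X) (hu : u ∈ measSupport μ)
    (E : Set X) (hE : E.Nonempty)
    (g : X → X → ℝ≥0∞)
    (hrep : ∀ v ∈ E, Measurable (g v) ∧ μ.map (· + v) ≪ μ ∧
      μ.map (· + v) = μ.withDensity (g v) ∧
      ∃ U : Set X, IsOpen U ∧ u ∈ U ∧ ContinuousOn (g v) U)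
    (hweak : IsEWeakMode μ K E u) :
    (⨆ v ∈ E, g v u) ≤ 1 := by
  refine iSup_le fun v => iSup_le fun hv => ?_
  obtain ⟨hmeas, hac, hdens, U, hUopen, hUu, hUcont⟩ := hrep v hv
  have hweakv := hweak.2 v hv
  by_contra hlt
  push_neg at hlt
  obtain ⟨c, hc1, hcg⟩ := exists_between hlt
  -- the set where the density exceeds c is a neighbourhood of u
  have hS : {x | c ≤ g v x} ∈ 𝓝 u := by
    have hca : ContinuousAt (g v) u := hUcont.continuousAt (hUopen.mem_nhds hUu)
    exact Filter.mem_of_superset (hca (Ioi_mem_nhds hcg)) fun x hx => le_of_lt (show c < g v x from hx)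
  -- shrinking: eventually u + r • K ⊆ S for any S ∈ 𝓝 u
  have hshrink : ∀ᶠ r in 𝓝[>] (0:ℝ), (fun y => u + r • y) '' K ⊆ {x | c ≤ g v x} := by
    have hV : (fun z : X => u + z) ⁻¹' {x | c ≤ g v x} ∈ 𝓝 (0:X) := by
      have hcont : Continuous fun z : X => u + z := continuous_const.add continuous_id
      have := hcont.continuousAt (x := (0:X)) (by simpa using hS)
      exact this
    have h2 := Bornology.isVonNBounded_iff_tendsto_smallSets_nhds.mp hKbdd
    rw [tendsto_smallSets_iff] at h2
    filter_upwards [(h2 _ hV).filter_mono nhdsWithin_le_nhds] with r hr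
    rintro x ⟨y, hy, rfl⟩
    exact hr (Set.smul_mem_smul_set hy)
  -- basic facts about K(u, r) for r > 0
  have key : ∀ᶠ r in 𝓝[>] (0:ℝ), c ≤ fK μ K (u - v) r / fK μ K u r := by
    filter_upwards [hshrink, self_mem_nhdsWithin] with r hrsub hr
    have hr : (0:ℝ) < r := hr
    set Kur : Set X := (fun y => u + r • y) '' K with hKur
    have hKurEq : Kur = (fun z : X => u + z) '' (r • K) := by
      rw [← Set.image_smul, Set.image_image]
    have hKurOpen : IsOpen Kur := by
      rw [hKurEq]
      exact (Homeomorph.addLeft u).isOpenMap _ (hKopen.smul₀ hr.ne')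
    have hKurMem : u ∈ Kur := ⟨0, hK0, by simp⟩
    have hKurPos : 0 < μ Kur := hu Kur hKurOpen hKurMem
    have hKurBdd : Bornology.IsVonNBounded ℝ Kur := by
      have h1 : Bornology.IsVonNBounded ℝ (r • K) := by
        have := hKbdd.image (σ := RingHom.id ℝ) (r • ContinuousLinearMap.id ℝ X)
        simpa [Set.image_smul] using this
      have h2 := (Bornology.isVonNBounded_singleton (𝕜 := ℝ) u).add h1
      have : Kur = {u} + r • K := by
        rw [hKurEq, Set.singleton_add]
      rwa [this]
    have hKurFin : μ Kur ≠ ⊤ := hfin Kur hKurBdd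
    -- identify fK μ K (u - v) r with the translated measure of Kur
    have hmap : fK μ K (u - v) r = μ.map (· + v) Kur := by
      rw [Measure.map_apply (measurable_add_const v) hKurOpen.measurableSet]
      have hpre : (· + v) ⁻¹' Kur = (fun y => (u - v) + r • y) '' K := by
        ext x
        simp only [Set.mem_preimage, hKur, Set.mem_image]
        constructor
        · rintro ⟨y, hy, hxy⟩
          refine ⟨y, hy, ?_⟩
          have hx : x = u + r • y - v := eq_sub_of_add_eq hxy.symm
          rw [hx]; abel
        · rintro ⟨y, hy, rfl⟩
          exact ⟨y, hy, by abel⟩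
      rw [hpre]; rfl
    have hfKu : fK μ K u r = μ Kur := rfl
    have hlb : c * fK μ K u r ≤ fK μ K (u - v) r := by
      rw [hmap, hdens, withDensity_apply _ hKurOpen.measurableSet]
      calc c * fK μ K u r = ∫⁻ _ in Kur, c ∂μ := by
            rw [setLIntegral_const, hfKu]
        _ ≤ ∫⁻ x in Kur, g v x ∂μ :=
            setLIntegral_mono hmeas fun x hx => hrsub hx
    rw [hfKu] at hlb ⊢
    rw [ENNReal.le_div_iff_mul_le (Or.inl hKurPos.ne') (Or.inl hKurFin)]
    exact hlb
  have hle : c ≤ limsup (fun r : ℝ => fK μ K (u - v) r / fK μ K u r) (𝓝[>] (0:ℝ)) :=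
    le_limsup_of_frequently_le' key.frequently
  exact absurd (hle.trans hweakv) (not_le.mpr hc1)
end

section
/- Let X be a first countable Hausdorff real topological vector space, μ a σ-finite nonzero Borel measure on X that is finite on bounded sets, and K a bounded open neighbourhood of the origin. Let u ∈ supp(μ), and let E be a nonempty subset of X such that for every v ∈ E the translated measure μ_v (defined by μ_v(A) := μ(A−v)) is absolutely continuous with respect to μ with a representative dμ_v/dμ of its Radon–Nikodym derivative that is continuous on some open neighbourhood of u. Suppose u is an E-weak mode of μ. If the function x ↦ sup_{v∈E} (dμ_v/dμ)(x) is continuous at u, then u is an E-strong mode of μ. -/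
open MeasureTheory Filter Set Topology
open scoped ENNReal NNReal Pointwise

/-- Proposition 4.6. Suppose that for each `v ∈ E` the translate
`μ_v = μ.map (· + v)` is absolutely continuous w.r.t. `μ` with representative `g v` of
`dμ_v/dμ` continuous on some open neighbourhood of `u`, and that `u` is an `E`-weak
mode. If `x ↦ sup_{v ∈ E} (dμ_v/dμ)(x)` is continuous at `u`, then `u` is an
`E`-strong mode. -/
theorem Estrong_of_Eweak_of_continuous_sup_density
    {X : Type*} [AddCommGroup X] [Module ℝ X] [TopologicalSpace X]
    [IsTopologicalAddGroup X] [ContinuousSMul ℝ X] [T2Space X]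
    [FirstCountableTopology X] [MeasurableSpace X] [BorelSpace X]
    (μ : Measure X) [SigmaFinite μ] (hμ : μ ≠ 0)
    (hfin : ∀ s : Set X, Bornology.IsVonNBounded ℝ s → μ s ≠ ⊤)
    (K : Set X) (hKopen : IsOpen K) (hK0 : (0:X) ∈ K)
    (hKbdd : Bornology.IsVonNBounded ℝ K)
    (u : X) (hu : u ∈ measSupport μ)
    (E : Set X) (hE : E.Nonempty)
    (g : X → X → ℝ≥0∞)
    (hrep : ∀ v ∈ E, Measurable (g v) ∧ μ.map (· + v) ≪ μ ∧
      μ.map (· + v) = μ.withDensity (g v) ∧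
      ∃ U : Set X, IsOpen U ∧ u ∈ U ∧ ContinuousOn (g v) U)
    (hweak : IsEWeakMode μ K E u)
    (hcont : ContinuousAt (fun x : X => ⨆ v ∈ E, g v x) u) :
    IsEStrongMode μ K E u := by
  -- notation for the ball
  set A : ℝ → Set X := fun r => (fun y => u + r • y) '' K with hA
  have hAimg : ∀ r : ℝ, A r = (u + ·) '' ((r • ·) '' K) := by
    intro r; simp only [hA, Set.image_image]
  have hAopen : ∀ r : ℝ, r ≠ 0 → IsOpen (A r) := by
    intro r hr
    rw [hAimg]
    exact (Homeomorph.addLeft u).isOpenMap _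
      ((Homeomorph.smulOfNeZero r hr).isOpenMap _ hKopen)
  have hAmeas : ∀ r : ℝ, r ≠ 0 → MeasurableSet (A r) :=
    fun r hr => (hAopen r hr).measurableSet
  have hAmem : ∀ r : ℝ, u ∈ A r := fun r => ⟨0, hK0, by simp⟩
  have hAbdd : ∀ r : ℝ, Bornology.IsVonNBounded ℝ (A r) := by
    intro r
    rw [hAimg]
    have h1 : Bornology.IsVonNBounded ℝ ((r • ·) '' K) := by
      have := hKbdd.image (σ := RingHom.id ℝ) (r • ContinuousLinearMap.id ℝ X)
      simpa using this
    have := h1.vadd (𝕜 := ℝ) u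
    simpa [← Set.image_vadd] using this
  have hApos : ∀ r : ℝ, r ≠ 0 → μ (A r) ≠ 0 :=
    fun r hr => (hu _ (hAopen r hr) (hAmem r)).ne'
  have hAfin : ∀ r : ℝ, μ (A r) ≠ ⊤ := fun r => hfin _ (hAbdd r)
  -- smallness of A r
  have hsmall : ∀ s ∈ 𝓝 u, ∀ᶠ r in 𝓝[>] (0:ℝ), A r ⊆ s := by
    intro s hs
    have h1 : Tendsto (fun r : ℝ => r • K) (𝓝 0) (𝓝 (0:X)).smallSets :=
      hKbdd.tendsto_smallSets_nhds
    have h2 : (u + ·) ⁻¹' s ∈ 𝓝 (0:X) := by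
      have hc : ContinuousAt (fun x : X => u + x) 0 := (continuous_add_left u).continuousAt
      exact hc (by simpa using hs)
    have h3 : ∀ᶠ r : ℝ in 𝓝 0, r • K ⊆ (u + ·) ⁻¹' s :=
      (Filter.tendsto_smallSets_iff.mp h1) _ h2
    filter_upwards [nhdsWithin_le_nhds h3] with r hr
    rw [hAimg, ← Set.image_smul] at *
    exact (Set.image_subset_iff).mpr hr
  -- translated mass formula
  have hfKu : ∀ r : ℝ, fK μ K u r = μ (A r) := fun r => rfl
  have htrans : ∀ v, ∀ r : ℝ, r ≠ 0 → v ∈ E →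
      fK μ K (u - v) r = ∫⁻ x in A r, g v x ∂μ := by
    intro v r hr hv
    obtain ⟨hgm, hac, hwd, _⟩ := hrep v hv
    have hset : (· + v) ⁻¹' (A r) = (fun y => (u - v) + r • y) '' K := by
      ext x
      simp only [hA, Set.mem_preimage, Set.mem_image]
      constructor
      · rintro ⟨y, hy, h⟩
        exact ⟨y, hy, by rw [sub_add_eq_add_sub, h, add_sub_cancel_right]⟩
      · rintro ⟨y, hy, h⟩
        exact ⟨y, hy, by rw [← h]; abel⟩
    calc fK μ K (u - v) r = μ ((· + v) ⁻¹' (A r)) := by rw [hset]; rfl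
      _ = (μ.map (· + v)) (A r) := (Measure.map_apply (measurable_add_const v) (hAmeas r hr)).symm
      _ = (μ.withDensity (g v)) (A r) := by rw [hwd]
      _ = ∫⁻ x in A r, g v x ∂μ := withDensity_apply _ (hAmeas r hr)
  -- each density is ≤ 1 at u
  have hg1 : ∀ v ∈ E, g v u ≤ 1 := by
    intro v hv
    by_contra h
    push_neg at h
    obtain ⟨a, ha1, hag⟩ := exists_between h
    obtain ⟨hgm, hac, hwd, U, hUopen, hUu, hUcont⟩ := hrep v hv
    have hca : ContinuousAt (g v) u := hUcont.continuousAt (hUopen.mem_nhds hUu)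
    have h2 : {x | a < g v x} ∈ 𝓝 u := hca (Ioi_mem_nhds hag)
    have hev : ∀ᶠ r in 𝓝[>] (0:ℝ), a ≤ fK μ K (u - v) r / fK μ K u r := by
      filter_upwards [hsmall _ h2, self_mem_nhdsWithin] with r hsub hr
      have hr' : r ≠ 0 := ne_of_gt hr
      have hlow : a * μ (A r) ≤ fK μ K (u - v) r := by
        rw [htrans v r hr' hv, ← setLIntegral_const]
        exact setLIntegral_mono' (hAmeas r hr') fun x hx => le_of_lt (hsub hx)
      rw [hfKu]
      exact (ENNReal.le_div_iff_mul_le (Or.inl (hApos r hr')) (Or.inl (hAfin r))).mpr hlow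
    have hli : a ≤ liminf (fun r : ℝ => fK μ K (u - v) r / fK μ K u r) (𝓝[>] (0:ℝ)) :=
      le_liminf_of_le (by isBoundedDefault) hev
    have := hli.trans ((liminf_le_limsup).trans (hweak.2 v hv))
    exact absurd this (not_le.mpr ha1)
  -- sup-density ≤ 1 at u
  have hS1 : (⨆ v ∈ E, g v u) ≤ 1 := iSup₂_le hg1
  refine ⟨hweak.1, ?_⟩
  refine le_of_forall_gt_imp_ge_of_dense fun c hc => ?_
  have h2 : {x | (⨆ v ∈ E, g v x) < c} ∈ 𝓝 u := hcont (Iio_mem_nhds (lt_of_le_of_lt hS1 hc))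
  refine limsup_le_of_le (by isBoundedDefault) ?_
  filter_upwards [hsmall _ h2, self_mem_nhdsWithin] with r hsub hr
  have hr' : r ≠ 0 := ne_of_gt hr
  have hup : (⨆ v ∈ E, fK μ K (u - v) r) ≤ c * μ (A r) := by
    refine iSup₂_le fun v hv => ?_
    rw [htrans v r hr' hv, ← setLIntegral_const]
    refine setLIntegral_mono' (hAmeas r hr') fun x hx => ?_
    exact le_of_lt (lt_of_le_of_lt (le_iSup₂ (f := fun v _ => g v x) v hv) (hsub hx))
  rw [hfKu]
  exact (ENNReal.div_le_iff (hApos r hr') (hAfin r)).mpr (hup.trans_eq (by ring))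
end

section
/- Let X be a first countable Hausdorff complex topological vector space, μ a nonzero Borel measure on X that is finite on bounded sets, and K a bounded open neighbourhood of the origin. For x ∈ X and ρ ∈ ℂ\{0} write φ(x,ρ) := μ(x + ρ·K). Suppose E ⊆ X is topologically dense in X, u ∈ supp(μ), and there exist v* ∈ E and r* ∈ (0,1) such that φ(u−v*,ρ) = sup_{z∈u−E} φ(z,ρ) for all ρ ∈ ℂ with 0 < |ρ| < r*. Then u satisfies lim_{|ρ|→0} φ(u−v,ρ)/φ(u,ρ) ≤ 1 for every v ∈ E (i.e. u is an E-weak mode) if and only if lim_{|ρ|→0} (sup_{z∈X} φ(z,ρ)) / φ(u,ρ) = 1 (i.e. u is a strong mode). -/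
open MeasureTheory Filter Set Topology
open scoped ENNReal NNReal

/-- `phiK μ K x ρ = μ(x + ρ • K)` for a complex scaling factor `ρ`. -/
noncomputable def phiK {X : Type*} [AddCommGroup X] [Module ℂ X] [MeasurableSpace X]
    (μ : Measure X) (K : Set X) (x : X) (ρ : ℂ) : ℝ≥0∞ :=
  μ ((fun y => x + ρ • y) '' K)

/-- The topological support of a Borel measure. -/
def measSupportC {X : Type*} [TopologicalSpace X] [MeasurableSpace X]
    (μ : Measure X) : Set X :=
  {x | ∀ U : Set X, IsOpen U → x ∈ U → 0 < μ U}

section aux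

variable {X : Type*} [AddCommGroup X] [Module ℂ X] [TopologicalSpace X]
    [IsTopologicalAddGroup X] [ContinuousSMul ℂ X]

omit [TopologicalSpace X] [IsTopologicalAddGroup X] [ContinuousSMul ℂ X] in
lemma setK_eq_aux (K : Set X) (x : X) {ρ : ℂ} (hρ : ρ ≠ 0) :
    (fun y => x + ρ • y) '' K = (fun p => ρ⁻¹ • (p - x)) ⁻¹' K := by
  ext p
  constructor
  · rintro ⟨y, hy, rfl⟩
    simpa [add_sub_cancel_left, inv_smul_smul₀ hρ] using hy
  · intro hp
    exact ⟨ρ⁻¹ • (p - x), hp, by simp [smul_inv_smul₀ hρ]⟩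

lemma setK_bdd_aux (K : Set X) (hK : Bornology.IsVonNBounded ℂ K) (x : X) (ρ : ℂ) :
    Bornology.IsVonNBounded ℂ ((fun y => x + ρ • y) '' K) := by
  have h1 : Bornology.IsVonNBounded ℂ ((fun y => ρ • y) '' K) := by
    have := hK.image (ρ • ContinuousLinearMap.id ℂ X)
    simpa using this
  have h2 := h1.vadd x
  rw [← Set.image_vadd, Set.image_image] at h2
  simpa [vadd_eq_add] using h2

lemma setK_open_aux (K : Set X) (hK : IsOpen K) (x : X) {ρ : ℂ} (hρ : ρ ≠ 0) :
    IsOpen ((fun y => x + ρ • y) '' K) := by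
  rw [setK_eq_aux K x hρ]
  exact hK.preimage ((continuous_id.sub continuous_const).const_smul _)

end aux

/-- Theorem 5.2. Complex scaling factors: if `E` is topologically
dense in `X`, `u ∈ supp(μ)`, and the `ℂ`-uniformity condition holds, then `u` is an
`E`-weak mode (w.r.t. limits as `|ρ| → 0`, `ρ ≠ 0`) if and only if `u` is a strong
mode. -/
theorem Eweak_iff_strong_complex
    {X : Type*} [AddCommGroup X] [Module ℂ X] [TopologicalSpace X]
    [IsTopologicalAddGroup X] [ContinuousSMul ℂ X] [T2Space X]
    [FirstCountableTopology X] [MeasurableSpace X] [BorelSpace X]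
    (μ : Measure X) (hμ : μ ≠ 0)
    (hfin : ∀ s : Set X, Bornology.IsVonNBounded ℂ s → μ s ≠ ⊤)
    (K : Set X) (hKopen : IsOpen K) (hK0 : (0:X) ∈ K)
    (hKbdd : Bornology.IsVonNBounded ℂ K)
    (E : Set X) (hE : Dense E) (u : X) (hu : u ∈ measSupportC μ)
    (hunif : ∃ v ∈ E, ∃ rs : ℝ, rs ∈ Set.Ioo (0:ℝ) 1 ∧
      ∀ ρ : ℂ, 0 < ‖ρ‖ → ‖ρ‖ < rs →
        phiK μ K (u - v) ρ = ⨆ w ∈ E, phiK μ K (u - w) ρ) :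
    (∀ v ∈ E, limsup (fun ρ : ℂ => phiK μ K (u - v) ρ / phiK μ K u ρ) (𝓝[≠] (0:ℂ)) ≤ 1)
      ↔ Tendsto (fun ρ : ℂ => (⨆ z : X, phiK μ K z ρ) / phiK μ K u ρ)
          (𝓝[≠] (0:ℂ)) (𝓝 1) := by
  obtain ⟨v₀, hv₀E, rs, ⟨hrs0, hrs1⟩, hvs⟩ := hunif
  -- positivity of `phiK μ K u ρ` for `ρ ≠ 0`
  have hpos : ∀ (ρ : ℂ), ρ ≠ 0 → 0 < phiK μ K u ρ := by
    intro ρ hρ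
    exact hu _ (setK_open_aux K hKopen u hρ) ⟨0, hK0, by simp⟩
  -- finiteness of `phiK`
  have hfin' : ∀ (x : X) (ρ : ℂ), phiK μ K x ρ ≠ ⊤ := fun x ρ =>
    hfin _ (setK_bdd_aux K hKbdd x ρ)
  -- `u - E` is dense
  have hDdense : Dense ((fun w => u - w) '' E) := by
    intro x
    have hx : u - x ∈ closure E := hE (u - x)
    have : x ∈ (fun w => u - w) '' closure E := ⟨u - x, hx, by simp⟩
    exact (image_closure_subset_closure_image
      (continuous_const.sub continuous_id)) this
  -- for `ρ ≠ 0`, the global sup equals the sup over `u - E`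
  have hsup_eq : ∀ (ρ : ℂ), ρ ≠ 0 →
      (⨆ z : X, phiK μ K z ρ) = ⨆ w ∈ E, phiK μ K (u - w) ρ := by
    intro ρ hρ
    refine le_antisymm (iSup_le fun z => ?_) (iSup₂_le fun w _ => le_iSup (fun z => phiK μ K z ρ) (u - w))
    -- approximate `z` by a sequence in `u - E`
    obtain ⟨w', hw'mem, hw'lim⟩ := mem_closure_iff_seq_limit.mp (hDdense z)
    set C : ℝ≥0∞ := ⨆ w ∈ E, phiK μ K (u - w) ρ with hC
    have hterm : ∀ n, phiK μ K (w' n) ρ ≤ C := by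
      intro n
      obtain ⟨e, heE, heq⟩ := hw'mem n
      rw [← heq]
      exact le_iSup₂ (f := fun w _ => phiK μ K (u - w) ρ) e heE
    -- Fatou-type argument via a monotone union
    set S : X → Set X := fun x => (fun y => x + ρ • y) '' K with hS
    set A : ℕ → Set X := fun n => ⋂ m, ⋂ (_ : n ≤ m), S (w' m) with hA
    have hmono : Monotone A := by
      intro a b hab
      exact Set.iInter₂_mono' fun m hm => ⟨m, hab.trans hm, le_rfl⟩
    have hsub : S z ⊆ ⋃ n, A n := by
      rintro p ⟨y, hyK, rfl⟩
      have hcont : Tendsto (fun n => ρ⁻¹ • (z + ρ • y - w' n)) atTop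
          (𝓝 (ρ⁻¹ • (z + ρ • y - z))) :=
        ((tendsto_const_nhds.sub hw'lim).const_smul _)
      have hyy : ρ⁻¹ • (z + ρ • y - z) = y := by
        rw [add_sub_cancel_left, inv_smul_smul₀ hρ]
      rw [hyy] at hcont
      have hev : ∀ᶠ n in atTop, ρ⁻¹ • (z + ρ • y - w' n) ∈ K :=
        hcont.eventually (hKopen.eventually_mem hyK)
      obtain ⟨n, hn⟩ := eventually_atTop.mp hev
      refine mem_iUnion.mpr ⟨n, ?_⟩
      refine Set.mem_iInter₂.mpr fun m hm => ?_
      exact ⟨ρ⁻¹ • (z + ρ • y - w' m), hn m hm, by simp [smul_inv_smul₀ hρ]⟩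
    calc phiK μ K z ρ = μ (S z) := rfl
      _ ≤ μ (⋃ n, A n) := measure_mono hsub
      _ = ⨆ n, μ (A n) := (hmono.directed_le).measure_iUnion
      _ ≤ C := iSup_le fun n => le_trans
          (measure_mono (Set.biInter_subset_of_mem (le_refl n))) (hterm n)
  constructor
  · -- weak ⇒ strong
    intro hweak
    have hevsmall : ∀ᶠ ρ : ℂ in 𝓝[≠] (0:ℂ),
        (⨆ z : X, phiK μ K z ρ) / phiK μ K u ρ
          = phiK μ K (u - v₀) ρ / phiK μ K u ρ := by
      have hball : ∀ᶠ ρ : ℂ in 𝓝[≠] (0:ℂ), ‖ρ‖ < rs := by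
        apply eventually_nhdsWithin_of_eventually_nhds
        have : Metric.ball (0:ℂ) rs ∈ 𝓝 (0:ℂ) := Metric.ball_mem_nhds 0 hrs0
        filter_upwards [this] with ρ hρ
        simpa [Complex.dist_eq] using hρ
      filter_upwards [hball, self_mem_nhdsWithin] with ρ hρball hρne
      have hρ : ρ ≠ 0 := hρne
      rw [hsup_eq ρ hρ, hvs ρ (norm_pos_iff.mpr hρ) hρball]
    have hge : ∀ᶠ ρ : ℂ in 𝓝[≠] (0:ℂ),
        (1:ℝ≥0∞) ≤ (⨆ z : X, phiK μ K z ρ) / phiK μ K u ρ := by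
      filter_upwards [self_mem_nhdsWithin] with ρ hρne
      have hρ : ρ ≠ 0 := hρne
      rw [ENNReal.le_div_iff_mul_le (Or.inl (hpos ρ hρ).ne') (Or.inl (hfin' u ρ))]
      rw [one_mul]
      exact le_iSup (fun z => phiK μ K z ρ) u
    refine tendsto_of_le_liminf_of_limsup_le (le_liminf_of_le (by isBoundedDefault) hge) ?_
    calc limsup (fun ρ : ℂ => (⨆ z : X, phiK μ K z ρ) / phiK μ K u ρ) (𝓝[≠] (0:ℂ))
        = limsup (fun ρ : ℂ => phiK μ K (u - v₀) ρ / phiK μ K u ρ) (𝓝[≠] (0:ℂ)) :=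
          limsup_congr hevsmall
      _ ≤ 1 := hweak v₀ hv₀E
  · -- strong ⇒ weak
    intro hstrong v hvE
    have hle : ∀ ρ : ℂ, phiK μ K (u - v) ρ / phiK μ K u ρ
        ≤ (⨆ z : X, phiK μ K z ρ) / phiK μ K u ρ := fun ρ =>
      ENNReal.div_le_div_right (le_iSup (fun z => phiK μ K z ρ) (u - v)) _
    calc limsup (fun ρ : ℂ => phiK μ K (u - v) ρ / phiK μ K u ρ) (𝓝[≠] (0:ℂ))
        ≤ limsup (fun ρ : ℂ => (⨆ z : X, phiK μ K z ρ) / phiK μ K u ρ) (𝓝[≠] (0:ℂ)) :=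
          limsup_le_limsup (Eventually.of_forall hle)
      _ = 1 := hstrong.limsup_eq
end

section
/- Let X be a first countable Hausdorff complex topological vector space, μ a nonzero Borel measure on X that is finite on bounded sets, K a bounded open neighbourhood of the origin, and V a bounded open neighbourhood of the origin. For x ∈ X and ρ ∈ ℂ\{0} write φ(x,ρ) := μ(x + ρ·K). Suppose E ⊆ X is topologically dense in V, u ∈ supp(μ), and there exist v* ∈ E ∩ V and r* ∈ (0,1) such that φ(u−v*,ρ) = sup_{z∈u−(E∩V)} φ(z,ρ) for all ρ ∈ ℂ with 0 < |ρ| < r*. Then u is a local E-weak mode of μ with respect to V (i.e. lim_{|ρ|→0} (sup_{z∈u−(E∩V)} φ(z,ρ)) / φ(u,ρ) ≤ 1) if and only if u is a local strong mode of μ with respect to V (i.e. lim_{|ρ|→0} (sup_{z∈u−V} φ(z,ρ)) / φ(u,ρ) = 1). -/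
open MeasureTheory Filter Set Topology
open scoped ENNReal NNReal

/-- Theorem 5.4, local modes. If `E` is topologically dense in the
bounded open neighbourhood `V` of the origin, `u ∈ supp(μ)`, and the local
`ℂ`-uniformity condition holds, then `u` is a local `E`-weak mode with respect to `V`
if and only if `u` is a local strong mode with respect to `V`. -/
theorem local_Eweak_iff_local_strong_complex
    {X : Type*} [AddCommGroup X] [Module ℂ X] [TopologicalSpace X]
    [IsTopologicalAddGroup X] [ContinuousSMul ℂ X] [T2Space X]
    [FirstCountableTopology X] [MeasurableSpace X] [BorelSpace X]
    (μ : Measure X) (hμ : μ ≠ 0)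
    (hfin : ∀ s : Set X, Bornology.IsVonNBounded ℂ s → μ s ≠ ⊤)
    (K : Set X) (hKopen : IsOpen K) (hK0 : (0:X) ∈ K)
    (hKbdd : Bornology.IsVonNBounded ℂ K)
    (V : Set X) (hVopen : IsOpen V) (hV0 : (0:X) ∈ V)
    (hVbdd : Bornology.IsVonNBounded ℂ V)
    (E : Set X) (hE : V ⊆ closure E) (u : X) (hu : u ∈ measSupportC μ)
    (hunif : ∃ v ∈ E ∩ V, ∃ rs : ℝ, rs ∈ Set.Ioo (0:ℝ) 1 ∧
      ∀ ρ : ℂ, 0 < ‖ρ‖ → ‖ρ‖ < rs →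
        phiK μ K (u - v) ρ = ⨆ w ∈ E ∩ V, phiK μ K (u - w) ρ) :
    (limsup (fun ρ : ℂ => (⨆ w ∈ E ∩ V, phiK μ K (u - w) ρ) / phiK μ K u ρ)
        (𝓝[≠] (0:ℂ)) ≤ 1)
      ↔ Tendsto (fun ρ : ℂ => (⨆ w ∈ V, phiK μ K (u - w) ρ) / phiK μ K u ρ)
          (𝓝[≠] (0:ℂ)) (𝓝 1) := by
  classical
  -- basic facts about the sets x + ρ • K
  have hmem_iff : ∀ (c : X) (ρ : ℂ) (z : X),
      z ∈ (fun y => c + ρ • y) '' K ↔ z - c ∈ (fun y : X => ρ • y) '' K := by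
    intro c ρ z
    constructor
    · rintro ⟨k, hk, rfl⟩
      exact ⟨k, hk, (add_sub_cancel_left c (ρ • k)).symm⟩
    · rintro ⟨k, hk, hkz⟩
      have hkz' : ρ • k = z - c := hkz
      refine ⟨k, hk, ?_⟩
      show c + ρ • k = z
      rw [hkz']
      abel
  have hDopen : ∀ {ρ : ℂ}, ρ ≠ 0 → IsOpen ((fun y : X => ρ • y) '' K) := by
    intro ρ hρ
    simpa [Set.image_smul] using hKopen.smul₀ hρ
  have hopen' : ∀ (x : X) {ρ : ℂ}, ρ ≠ 0 → IsOpen ((fun y => x + ρ • y) '' K) := by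
    intro x ρ hρ
    have h2 : (fun y => x + ρ • y) '' K
        = (fun z => x + z) '' ((fun y : X => ρ • y) '' K) := by
      rw [Set.image_image]
    rw [h2]
    exact (isOpenMap_add_left x) _ (hDopen hρ)
  have hmem' : ∀ (x : X) (ρ : ℂ), x ∈ (fun y => x + ρ • y) '' K :=
    fun x ρ => ⟨0, hK0, by simp⟩
  have hpos : ∀ {ρ : ℂ}, ρ ≠ 0 → 0 < phiK μ K u ρ := fun {ρ} hρ =>
    hu _ (hopen' u hρ) (hmem' u ρ)
  have hfin' : ∀ (x : X) (ρ : ℂ), phiK μ K x ρ ≠ ⊤ := by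
    intro x ρ
    refine hfin _ ?_
    have hb : Bornology.IsVonNBounded ℂ ((fun y : X => ρ • y) '' K) := by
      simpa using hKbdd.image (ρ • ContinuousLinearMap.id ℂ X)
    have h2 : (fun y => x + ρ • y) '' K
        = (fun z => x + z) '' ((fun y : X => ρ • y) '' K) := by
      rw [Set.image_image]
    have := (Bornology.isVonNBounded_singleton (𝕜 := ℂ) x).add hb
    rw [h2, ← Set.singleton_add]
    exact this
  -- the two suprema agree for every ρ ≠ 0
  have hkey : ∀ {ρ : ℂ}, ρ ≠ 0 →
      (⨆ w ∈ V, phiK μ K (u - w) ρ) = ⨆ w ∈ E ∩ V, phiK μ K (u - w) ρ := by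
    intro ρ hρ
    refine le_antisymm ?_ (iSup₂_le fun w hw => le_biSup (fun w => phiK μ K (u - w) ρ) hw.2)
    refine iSup₂_le fun w hw => ?_
    have hwc : w ∈ closure (E ∩ V) := by
      rw [_root_.mem_closure_iff]
      intro O hO hwO
      obtain ⟨y, hyO, hyE⟩ := _root_.mem_closure_iff.mp (hE hw) (O ∩ V)
        (hO.inter hVopen) ⟨hwO, hw⟩
      exact ⟨y, hyO.1, hyE, hyO.2⟩
    obtain ⟨x, hxmem, hxlim⟩ := mem_closure_iff_seq_limit.mp hwc
    set A : ℕ → Set X := fun n => (fun y => (u - x n) + ρ • y) '' K with hA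
    set B : ℕ → Set X := fun N => ⋂ n, ⋂ (_ : N ≤ n), A n with hB
    have hBmono : Monotone B := by
      intro N M hNM z hz
      simp only [hB, Set.mem_iInter] at hz ⊢
      intro n hn
      exact hz n (hNM.trans hn)
    have hsub : (fun y => (u - w) + ρ • y) '' K ⊆ ⋃ N, B N := by
      intro z hz
      rw [hmem_iff] at hz
      have hlim : Tendsto (fun n => z - (u - x n)) atTop (𝓝 (z - (u - w))) :=
        tendsto_const_nhds.sub (tendsto_const_nhds.sub hxlim)
      have hev : ∀ᶠ n in atTop, z - (u - x n) ∈ (fun y : X => ρ • y) '' K :=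
        hlim.eventually_mem ((hDopen hρ).mem_nhds hz)
      obtain ⟨N, hN⟩ := eventually_atTop.mp hev
      refine Set.mem_iUnion.mpr ⟨N, ?_⟩
      simp only [hB, Set.mem_iInter]
      intro n hn
      rw [hA, hmem_iff]
      exact hN n hn
    calc phiK μ K (u - w) ρ ≤ μ (⋃ N, B N) := measure_mono hsub
      _ = ⨆ N, μ (B N) := hBmono.measure_iUnion
      _ ≤ ⨆ w ∈ E ∩ V, phiK μ K (u - w) ρ := by
          refine iSup_le fun N => ?_
          have h1 : μ (B N) ≤ phiK μ K (u - x N) ρ := by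
            refine measure_mono ?_
            intro z hz
            simp only [hB, Set.mem_iInter] at hz
            exact hz N le_rfl
          exact h1.trans (le_biSup (fun w => phiK μ K (u - w) ρ) (hxmem N))
  -- the strong ratio is eventually ≥ 1
  have hone : ∀ᶠ ρ in 𝓝[≠] (0:ℂ),
      (1:ℝ≥0∞) ≤ (⨆ w ∈ V, phiK μ K (u - w) ρ) / phiK μ K u ρ := by
    filter_upwards [self_mem_nhdsWithin] with ρ hρ
    have hρ0 : ρ ≠ 0 := hρ
    have h1 : phiK μ K u ρ ≤ ⨆ w ∈ V, phiK μ K (u - w) ρ := by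
      have := le_biSup (fun w => phiK μ K (u - w) ρ) hV0
      simpa using this
    calc (1:ℝ≥0∞) = phiK μ K u ρ / phiK μ K u ρ :=
          (ENNReal.div_self (hpos hρ0).ne' (hfin' u ρ)).symm
      _ ≤ (⨆ w ∈ V, phiK μ K (u - w) ρ) / phiK μ K u ρ :=
          ENNReal.div_le_div_right h1 _
  -- the two ratio functions agree on the punctured neighbourhood
  have hcongr : (fun ρ : ℂ => (⨆ w ∈ E ∩ V, phiK μ K (u - w) ρ) / phiK μ K u ρ)
      =ᶠ[𝓝[≠] (0:ℂ)]
      fun ρ : ℂ => (⨆ w ∈ V, phiK μ K (u - w) ρ) / phiK μ K u ρ := by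
    filter_upwards [self_mem_nhdsWithin] with ρ hρ
    have hρ0 : ρ ≠ 0 := hρ
    rw [hkey hρ0]
  constructor
  · intro h
    have hsup : limsup (fun ρ : ℂ => (⨆ w ∈ V, phiK μ K (u - w) ρ) / phiK μ K u ρ)
        (𝓝[≠] (0:ℂ)) ≤ 1 := by
      rw [← limsup_congr hcongr]
      exact h
    have hinf : (1:ℝ≥0∞) ≤ liminf
        (fun ρ : ℂ => (⨆ w ∈ V, phiK μ K (u - w) ρ) / phiK μ K u ρ) (𝓝[≠] (0:ℂ)) :=
      le_liminf_of_le (by isBoundedDefault) hone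
    exact tendsto_of_le_liminf_of_limsup_le hinf hsup
  · intro h
    rw [limsup_congr hcongr]
    exact h.limsup_eq.le
end

section
/- There exists a finite nonzero Borel measure μ on ℝ² and a point u ∈ supp(μ) such that, taking K to be the open unit ℓ∞-ball and E = ℚ² (which is topologically dense in ℝ²), u is an E-weak mode of μ but u is not an E-strong mode of μ; in particular, μ admits E-weak modes but no strong mode. -/
open MeasureTheory Filter Set Topology
open scoped ENNReal NNReal

namespace Ex42

noncomputable section

/-- An irrational base point in `(1/4, 3/4)`. -/
def al : ℝ := Real.sqrt 2 - 1

lemma al_irr : Irrational al := by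
  have h := irrational_sqrt_two
  simpa [al] using Irrational.sub_ratCast (q := 1) h

lemma al_mem : (4⁻¹ : ℝ) ≤ al ∧ al ≤ 3/4 := by
  have h2 : (Real.sqrt 2) ^ 2 = 2 := Real.sq_sqrt (by norm_num)
  have hnn : 0 ≤ Real.sqrt 2 := Real.sqrt_nonneg 2
  constructor <;> [skip; skip] <;> · simp only [al] ; nlinarith

/-- An enumeration of the rationals. -/
def qe (k : ℕ) : ℚ := (Encodable.decode₂ ℚ k).getD 0

lemma qe_surj (p : ℚ) : ∃ k, qe k = p :=
  ⟨Encodable.encode p, by simp [qe, Encodable.decode₂_encode]⟩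

/-- Radii of removed intervals. -/
def de (k : ℕ) : ℝ := (2⁻¹ : ℝ) ^ k * (min 1 (((qe k : ℝ) - al) ^ 2) / 32)

lemma qe_ne (k : ℕ) : ((qe k : ℝ)) - al ≠ 0 :=
  sub_ne_zero.mpr (al_irr.ne_rat (qe k)).symm

lemma de_pos (k : ℕ) : 0 < de k := by
  have h := qe_ne k
  have h2 : 0 < ((qe k : ℝ) - al) ^ 2 := by positivity
  have h3 : 0 < min 1 (((qe k : ℝ) - al) ^ 2) := lt_min one_pos h2
  exact mul_pos (pow_pos (by norm_num) k) (by linarith)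

lemma de_le (k : ℕ) : de k ≤ 1/32 := by
  have h1 : ((2⁻¹ : ℝ)) ^ k ≤ 1 := pow_le_one₀ (by norm_num) (by norm_num)
  have h2 : min 1 (((qe k : ℝ) - al) ^ 2) ≤ 1 := min_le_left _ _
  have h3 : 0 ≤ min 1 (((qe k : ℝ) - al) ^ 2) := le_min (by norm_num) (by positivity)
  have h0 : (0:ℝ) < (2⁻¹ : ℝ) ^ k := by positivity
  calc de k ≤ 1 * (min 1 (((qe k : ℝ) - al) ^ 2) / 32) := by
        unfold de; gcongr
    _ ≤ 1/32 := by rw [one_mul]; linarith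

/-- The fat-Cantor-type set avoiding all rationals. -/
def Aset : Set ℝ := Icc 0 1 \ ⋃ k, Metric.ball ((qe k : ℝ)) (de k)

lemma Aset_closed : IsClosed Aset :=
  isClosed_Icc.sdiff (isOpen_iUnion fun _ => Metric.isOpen_ball)

lemma Aset_subset : Aset ⊆ Icc 0 1 := diff_subset

lemma rat_not_mem_Aset (p : ℚ) : ((p : ℝ)) ∉ Aset := by
  obtain ⟨k, hk⟩ := qe_surj p
  intro h
  exact h.2 (mem_iUnion.mpr ⟨k, by simp [hk, Metric.mem_ball, de_pos k]⟩)

lemma volume_Aset_le : volume Aset ≤ 1 := by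
  calc volume Aset ≤ volume (Icc (0:ℝ) 1) := measure_mono Aset_subset
    _ = 1 := by simp

/-- Density lower bound at `al`. -/
lemma Aset_density {r : ℝ} (h0 : 0 < r) (h1 : r ≤ 4⁻¹) :
    ENNReal.ofReal (2*r - r^2) ≤ volume (Metric.ball al r ∩ Aset) := by
  have hal := al_mem
  have hb : Metric.ball al r ⊆ Icc (0:ℝ) 1 := by
    rw [Real.ball_eq_Ioo]
    intro x hx
    simp only [mem_Ioo] at hx
    constructor <;> [linarith [hx.1]; linarith [hx.2]]
  -- cover
  have hcover : Metric.ball al r ⊆ (Metric.ball al r ∩ Aset) ∪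
      ⋃ k, (Metric.ball ((qe k : ℝ)) (de k) ∩ Metric.ball al r) := by
    intro x hx
    by_cases hA : x ∈ Aset
    · exact Or.inl ⟨hx, hA⟩
    · right
      have hI : x ∈ Icc (0:ℝ) 1 := hb hx
      have hU : x ∈ ⋃ k, Metric.ball ((qe k : ℝ)) (de k) := by
        by_contra h
        exact hA ⟨hI, h⟩
      obtain ⟨k, hk⟩ := mem_iUnion.mp hU
      exact mem_iUnion.mpr ⟨k, ⟨hk, hx⟩⟩
  -- term bounds
  have hterm : ∀ k, volume (Metric.ball ((qe k : ℝ)) (de k) ∩ Metric.ball al r)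
      ≤ ENNReal.ofReal ((2⁻¹:ℝ)^k * (r^2/4)) := by
    intro k
    by_cases hne : (Metric.ball ((qe k : ℝ)) (de k) ∩ Metric.ball al r).Nonempty
    · obtain ⟨x, hx1, hx2⟩ := hne
      rw [Metric.mem_ball, Real.dist_eq] at hx1 hx2
      have hd : |((qe k : ℝ)) - al| < r + de k := by
        have h3 : |((qe k : ℝ)) - al| ≤ |x - (qe k : ℝ)| + |x - al| := by
          have := abs_sub_abs_le_abs_sub ((qe k : ℝ) - al) 0
          calc |((qe k : ℝ)) - al| = |(x - al) - (x - (qe k : ℝ))| := by ring_nf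
            _ ≤ |x - al| + |x - (qe k : ℝ)| := abs_sub _ _
            _ = |x - (qe k : ℝ)| + |x - al| := by ring
        linarith
      have hq1 : |((qe k : ℝ)) - al| ≤ 1 := by
        by_contra h
        push_neg at h
        have := de_le k
        linarith
      have hmin : min 1 (((qe k : ℝ) - al) ^ 2) = ((qe k : ℝ) - al) ^ 2 :=
        min_eq_right (by nlinarith [sq_abs ((qe k : ℝ) - al), abs_nonneg ((qe k : ℝ) - al)])
      have h2k0 : (0:ℝ) < (2⁻¹ : ℝ) ^ k := by positivity
      have h2k1 : ((2⁻¹ : ℝ)) ^ k ≤ 1 := pow_le_one₀ (by norm_num) (by norm_num)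
      have hde : de k ≤ |((qe k : ℝ)) - al| / 32 := by
        rw [de, hmin]
        have hsq : (((qe k : ℝ)) - al)^2 ≤ |((qe k : ℝ)) - al| := by
          nlinarith [sq_abs ((qe k : ℝ) - al), abs_nonneg ((qe k : ℝ) - al)]
        have hnn : 0 ≤ (((qe k : ℝ)) - al)^2 := by positivity
        calc (2⁻¹ : ℝ) ^ k * ((((qe k : ℝ)) - al)^2 / 32) ≤ 1 * ((((qe k : ℝ)) - al)^2 / 32) := by gcongr
          _ ≤ |((qe k : ℝ)) - al| / 32 := by linarith
      have habs : |((qe k : ℝ)) - al| < 2*r := by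
        have := abs_nonneg (((qe k : ℝ)) - al)
        linarith
      have hde2 : de k ≤ (2⁻¹:ℝ)^k * (r^2/8) := by
        rw [de, hmin]
        have hsq : (((qe k : ℝ)) - al)^2 ≤ 4*r^2 := by
          nlinarith [sq_abs ((qe k : ℝ) - al), abs_nonneg ((qe k : ℝ) - al)]
        apply mul_le_mul_of_nonneg_left _ h2k0.le
        linarith
      calc volume (Metric.ball ((qe k : ℝ)) (de k) ∩ Metric.ball al r)
          ≤ volume (Metric.ball ((qe k : ℝ)) (de k)) := measure_mono inter_subset_left
        _ = ENNReal.ofReal (2 * de k) := by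
            rw [Real.ball_eq_Ioo, Real.volume_Ioo]; ring_nf
        _ ≤ ENNReal.ofReal ((2⁻¹:ℝ)^k * (r^2/4)) := by
            apply ENNReal.ofReal_le_ofReal; nlinarith [h2k0]
    · rw [not_nonempty_iff_eq_empty] at hne
      simp [hne]
  have hsum : ∑' k, ENNReal.ofReal ((2⁻¹:ℝ)^k * (r^2/4)) = ENNReal.ofReal (r^2/2) := by
    have heq : ∀ k:ℕ, ENNReal.ofReal ((2⁻¹:ℝ)^k * (r^2/4))
        = (2⁻¹:ℝ≥0∞)^k * ENNReal.ofReal (r^2/4) := by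
      intro k
      have h12 : ((2⁻¹:ℝ≥0∞)) = ENNReal.ofReal ((2⁻¹:ℝ)) := by
        rw [ENNReal.ofReal_inv_of_pos (by norm_num)]; norm_num
      rw [ENNReal.ofReal_mul (by positivity), h12, ← ENNReal.ofReal_pow (by norm_num)]
    rw [tsum_congr heq, ENNReal.tsum_mul_right, ENNReal.tsum_geometric,
      ENNReal.one_sub_inv_two, inv_inv]
    rw [show ((2:ℝ≥0∞)) = ENNReal.ofReal (2:ℝ) by simp]
    rw [← ENNReal.ofReal_mul (by norm_num), show (2:ℝ)*(r^2/4) = r^2/2 by ring]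
  have hmain : ENNReal.ofReal (2*r) ≤ volume (Metric.ball al r ∩ Aset) + ENNReal.ofReal (r^2/2) := by
    calc ENNReal.ofReal (2*r) = volume (Metric.ball al r) := by
          rw [Real.ball_eq_Ioo, Real.volume_Ioo]; ring_nf
      _ ≤ volume ((Metric.ball al r ∩ Aset) ∪
          ⋃ k, (Metric.ball ((qe k : ℝ)) (de k) ∩ Metric.ball al r)) := measure_mono hcover
      _ ≤ volume (Metric.ball al r ∩ Aset) +
          volume (⋃ k, (Metric.ball ((qe k : ℝ)) (de k) ∩ Metric.ball al r)) := measure_union_le _ _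
      _ ≤ volume (Metric.ball al r ∩ Aset) +
          ∑' k, volume (Metric.ball ((qe k : ℝ)) (de k) ∩ Metric.ball al r) := by
            gcongr; exact measure_iUnion_le _
      _ ≤ volume (Metric.ball al r ∩ Aset) + ∑' k, ENNReal.ofReal ((2⁻¹:ℝ)^k * (r^2/4)) := by
            gcongr with k; exact hterm k
      _ = volume (Metric.ball al r ∩ Aset) + ENNReal.ofReal (r^2/2) := by rw [hsum]
  have hfin : ENNReal.ofReal (2*r) - ENNReal.ofReal (r^2/2) ≤ volume (Metric.ball al r ∩ Aset) :=
    tsub_le_iff_right.mpr hmain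
  calc ENNReal.ofReal (2*r - r^2) ≤ ENNReal.ofReal (2*r - r^2/2) :=
        ENNReal.ofReal_le_ofReal (by nlinarith)
    _ = ENNReal.ofReal (2*r) - ENNReal.ofReal (r^2/2) := by
        rw [ENNReal.ofReal_sub _ (by positivity)]
    _ ≤ volume (Metric.ball al r ∩ Aset) := hfin

/-! ### The pieces -/

/-- Scale of piece `m`. -/
def tm (m : ℕ) : ℝ := (4⁻¹:ℝ) ^ (m+1)

/-- Center of piece `m`. -/
def cm (m : ℕ) : ℝ := 3*m+3

/-- Piece `m`: an affine copy of `Aset`. -/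
def Bm (m : ℕ) : Set ℝ := (fun x => (x - cm m)/tm m) ⁻¹' Aset

/-- Density of piece `m`. -/
def dm (m : ℕ) : ℝ≥0∞ := 2 ^ (m+1)

lemma tm_pos (m : ℕ) : 0 < tm m := by unfold tm; positivity

lemma tm_le (m : ℕ) : tm m ≤ 4⁻¹ := by
  unfold tm
  calc (4⁻¹:ℝ)^(m+1) ≤ (4⁻¹:ℝ)^1 := pow_le_pow_of_le_one (by norm_num) (by norm_num) (by omega)
    _ = 4⁻¹ := pow_one _

lemma cm_ge (m : ℕ) : 3 ≤ cm m := by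
  have : (0:ℝ) ≤ m := Nat.cast_nonneg m
  simp only [cm]; linarith

lemma Bm_subset (m : ℕ) : Bm m ⊆ Icc (cm m) (cm m + tm m) := by
  intro x hx
  have h := Aset_subset hx
  obtain ⟨h1, h2⟩ := h
  have ht := tm_pos m
  have h1' : 0 ≤ x - cm m := by
    by_contra hc
    push_neg at hc
    have : (x - cm m)/tm m < 0 := div_neg_of_neg_of_pos (by linarith) ht
    simp only at h1
    linarith
  have h2' : x - cm m ≤ tm m := by
    have := (div_le_one ht).mp h2
    linarith
  rw [mem_Icc]
  constructor <;> linarith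

lemma Bm_closed (m : ℕ) : IsClosed (Bm m) :=
  Aset_closed.preimage ((continuous_id.sub continuous_const).div_const _)

lemma rat_not_mem_Bm (m : ℕ) (p : ℚ) : ((p:ℝ)) ∉ Bm m := by
  intro h
  have hval : (((p:ℝ)) - cm m)/tm m = (((p - (3*m+3 : ℚ))/((4⁻¹:ℚ)^(m+1)) : ℚ) : ℝ) := by
    push_cast [tm, cm]
    norm_num
  rw [Bm, mem_preimage, hval] at h
  exact rat_not_mem_Aset _ h

lemma vol_preimage (m : ℕ) (S : Set ℝ) :
    volume ((fun x => (x - cm m)/tm m) ⁻¹' S) = ENNReal.ofReal (tm m) * volume S := by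
  have ht := tm_pos m
  have h : (fun x : ℝ => (x - cm m)/tm m) = (fun y => (tm m)⁻¹ * y) ∘ (fun x => -cm m + x) := by
    ext x; simp only [Function.comp_apply]; ring
  rw [h, preimage_comp, measure_preimage_add volume (-cm m) _,
    Real.volume_preimage_mul_left (inv_ne_zero ht.ne')]
  rw [inv_inv, abs_of_pos ht]

/-! ### The measure `nu` on `ℝ` -/

/-- The one-dimensional measure. -/
def nu : Measure ℝ :=
  volume.restrict (Icc (-1) 1) + Measure.sum (fun m => dm m • volume.restrict (Bm m))

lemma nu_apply {s : Set ℝ} (hs : MeasurableSet s) :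
    nu s = volume (s ∩ Icc (-1) 1) + ∑' m, dm m * volume (s ∩ Bm m) := by
  simp only [nu, Measure.add_apply, Measure.sum_apply _ hs, Measure.smul_apply,
    Measure.restrict_apply hs, smul_eq_mul]

lemma two_mul_four_inv : (2:ℝ≥0∞) * (4:ℝ≥0∞)⁻¹ = 2⁻¹ := by
  rw [show (4:ℝ≥0∞) = 2*2 by norm_num,
    ENNReal.mul_inv (by norm_num) (by norm_num), ← mul_assoc,
    ENNReal.mul_inv_cancel (by norm_num) (by norm_num), one_mul]

lemma dm_tm (m : ℕ) : dm m * ENNReal.ofReal (tm m) = (2⁻¹:ℝ≥0∞)^(m+1) := by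
  have h4 : ENNReal.ofReal (tm m) = ((4:ℝ≥0∞)⁻¹)^(m+1) := by
    rw [tm, show ((4:ℝ≥0∞)⁻¹) = ENNReal.ofReal (4⁻¹:ℝ) by
        rw [ENNReal.ofReal_inv_of_pos (by norm_num)]; norm_num,
      ← ENNReal.ofReal_pow (by norm_num)]
  rw [dm, h4, ← mul_pow, two_mul_four_inv]

instance nu_finite : IsFiniteMeasure nu := by
  refine ⟨lt_of_le_of_lt ?_ (by norm_num : (2+2:ℝ≥0∞) < ⊤)⟩
  rw [nu_apply MeasurableSet.univ]
  have h1 : volume (univ ∩ Icc (-1:ℝ) 1) ≤ 2 := by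
    rw [univ_inter, Real.volume_Icc]
    norm_num
  have h2 : ∑' m, dm m * volume (univ ∩ Bm m) ≤ 2 := by
    have hterm : ∀ m, dm m * volume (univ ∩ Bm m) ≤ (2⁻¹:ℝ≥0∞)^m := by
      intro m
      rw [univ_inter]
      have hv : volume (Bm m) = ENNReal.ofReal (tm m) * volume Aset := vol_preimage m Aset
      calc dm m * volume (Bm m) ≤ dm m * (ENNReal.ofReal (tm m) * 1) := by
            rw [hv]; gcongr; exact volume_Aset_le
        _ = (2⁻¹:ℝ≥0∞)^(m+1) := by rw [mul_one, dm_tm]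
        _ ≤ (2⁻¹:ℝ≥0∞)^m := by
            apply pow_le_pow_of_le_one (by norm_num) (by norm_num) (by omega)
    calc ∑' m, dm m * volume (univ ∩ Bm m) ≤ ∑' m, (2⁻¹:ℝ≥0∞)^m := ENNReal.tsum_le_tsum hterm
      _ = 2 := by rw [ENNReal.tsum_geometric, ENNReal.one_sub_inv_two, inv_inv]
  exact add_le_add h1 h2

/-! ### Ball estimates for `nu` -/

lemma ball_inter_Bm_empty {a r : ℝ} (m : ℕ) (h : a + r ≤ cm m) :
    Metric.ball a r ∩ Bm m = ∅ := by
  rw [eq_empty_iff_forall_notMem]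
  rintro x ⟨hx1, hx2⟩
  rw [Real.ball_eq_Ioo, mem_Ioo] at hx1
  have := (Bm_subset m hx2).1
  linarith [hx1.2]

lemma nu_ball_zero {r : ℝ} (h0 : 0 < r) (h1 : r ≤ 1) :
    nu (Metric.ball (0:ℝ) r) = ENNReal.ofReal (2*r) := by
  have hIcc : Metric.ball (0:ℝ) r ∩ Icc (-1) 1 = Metric.ball 0 r := by
    apply inter_eq_left.mpr
    rw [Real.ball_eq_Ioo]
    intro x hx
    rw [mem_Ioo] at hx
    exact ⟨by linarith [hx.1], by linarith [hx.2]⟩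
  have hBm : ∀ m, Metric.ball (0:ℝ) r ∩ Bm m = ∅ := fun m =>
    ball_inter_Bm_empty m (by have := cm_ge m; linarith)
  have hz : ∑' m, dm m * volume (Metric.ball (0:ℝ) r ∩ Bm m) = 0 := by
    simp [hBm]
  rw [nu_apply measurableSet_ball, hIcc, hz, add_zero, Real.ball_eq_Ioo, Real.volume_Ioo]
  ring_nf

/-- Center point of piece `m`. -/
def zm (m : ℕ) : ℝ := cm m + tm m * al

lemma ball_inter_Bm (m : ℕ) (s : ℝ) :
    Metric.ball (zm m) s ∩ Bm m
      = (fun x => (x - cm m)/tm m) ⁻¹' (Metric.ball al (s/tm m) ∩ Aset) := by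
  have ht := tm_pos m
  ext x
  simp only [mem_inter_iff, mem_preimage, Metric.mem_ball, Real.dist_eq, Bm]
  have key : |(x - cm m)/tm m - al| < s/tm m ↔ |x - zm m| < s := by
    rw [show (x - cm m)/tm m - al = (x - zm m)/tm m from by rw [eq_div_iff ht.ne', sub_mul, div_mul_cancel₀ _ ht.ne', zm]; ring]
    rw [abs_div, abs_of_pos ht, div_lt_div_iff₀ ht ht, mul_lt_mul_iff_of_pos_right ht]
  tauto

lemma nu_piece_lower (m : ℕ) {s : ℝ} (h0 : 0 < s) (h1 : s ≤ tm m * 4⁻¹) :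
    dm m * ENNReal.ofReal (7/4 * s) ≤ nu (Metric.ball (zm m) s) := by
  have ht := tm_pos m
  have hr0 : 0 < s/tm m := div_pos h0 ht
  have hr1 : s/tm m ≤ 4⁻¹ := by rw [div_le_iff₀ ht]; linarith
  have hge : dm m * volume (Metric.ball (zm m) s ∩ Bm m) ≤ nu (Metric.ball (zm m) s) := by
    rw [nu_apply measurableSet_ball]
    calc dm m * volume (Metric.ball (zm m) s ∩ Bm m)
        ≤ ∑' k, dm k * volume (Metric.ball (zm m) s ∩ Bm k) := ENNReal.le_tsum m
      _ ≤ _ := le_add_self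
  have hvol : volume (Metric.ball (zm m) s ∩ Bm m)
      = ENNReal.ofReal (tm m) * volume (Metric.ball al (s/tm m) ∩ Aset) := by
    rw [ball_inter_Bm m s, vol_preimage]
  have hdens := Aset_density hr0 hr1
  calc dm m * ENNReal.ofReal (7/4 * s)
      ≤ dm m * (ENNReal.ofReal (tm m) * ENNReal.ofReal (2*(s/tm m) - (s/tm m)^2)) := by
        rw [← ENNReal.ofReal_mul ht.le]
        apply mul_le_mul_right
        apply ENNReal.ofReal_le_ofReal
        have heq : tm m * (2*(s/tm m) - (s/tm m)^2) = 2*s - s^2/tm m := by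
          field_simp
        rw [heq]
        have hs4 : s^2/tm m ≤ s * 4⁻¹ := by
          rw [show s^2/tm m = s * (s/tm m) by ring]
          nlinarith
        linarith
    _ ≤ dm m * (ENNReal.ofReal (tm m) * volume (Metric.ball al (s/tm m) ∩ Aset)) :=
        mul_le_mul_right (mul_le_mul_right hdens _) _
    _ = dm m * volume (Metric.ball (zm m) s ∩ Bm m) := by rw [hvol]
    _ ≤ nu (Metric.ball (zm m) s) := hge

lemma pow_sum_bound (M : ℕ) : (1:ℝ≥0∞) + ∑ m ∈ Finset.range M, dm m ≤ 2^(M+1) := by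
  induction M with
  | zero =>
      simp only [Finset.range_zero, Finset.sum_empty, add_zero, pow_one]
      norm_num
  | succ M ih =>
      rw [Finset.sum_range_succ, ← add_assoc]
      calc (1:ℝ≥0∞) + (∑ m ∈ Finset.range M, dm m) + dm M
          ≤ 2^(M+1) + 2^(M+1) := add_le_add ih le_rfl
        _ = 2^(M+1+1) := by ring

lemma vol_ball_real (a r : ℝ) (h0 : 0 < r) :
    volume (Metric.ball a r) = ENNReal.ofReal (2*r) := by
  rw [Real.ball_eq_Ioo, Real.volume_Ioo]
  ring_nf

lemma nu_ball_upper (a : ℝ) : ∃ N : ℕ, ∀ r : ℝ, 0 < r → r ≤ 2⁻¹ →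
    nu (Metric.ball a r) ≤ 2^N * ENNReal.ofReal (2*r) := by
  refine ⟨⌈|a|⌉₊ + 1, fun r h0 h1 => ?_⟩
  set M := ⌈|a|⌉₊ with hM
  rw [nu_apply measurableSet_ball]
  have hvol_ball := vol_ball_real a r h0
  have hIcc : volume (Metric.ball a r ∩ Icc (-1) 1) ≤ ENNReal.ofReal (2*r) := by
    rw [← hvol_ball]; exact measure_mono inter_subset_left
  have hterm : ∀ m, dm m * volume (Metric.ball a r ∩ Bm m)
      ≤ (if m ∈ Finset.range M then dm m else 0) * ENNReal.ofReal (2*r) := by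
    intro m
    by_cases hm : m ∈ Finset.range M
    · rw [if_pos hm]
      gcongr
      rw [← hvol_ball]
      exact measure_mono inter_subset_left
    · rw [if_neg hm, zero_mul]
      have hm' : M ≤ m := by
        rw [Finset.mem_range] at hm
        omega
      have hempty : Metric.ball a r ∩ Bm m = ∅ := by
        apply ball_inter_Bm_empty
        have hMa : |a| ≤ (M:ℝ) := Nat.le_ceil _
        have hMm : (M:ℝ) ≤ m := Nat.cast_le.mpr hm'
        have ha : a ≤ |a| := le_abs_self a
        have hm0 : (0:ℝ) ≤ m := Nat.cast_nonneg m
        simp only [cm]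
        linarith
      rw [hempty]
      simp
  have htsum : ∑' m, (if m ∈ Finset.range M then dm m else 0)
      = ∑ m ∈ Finset.range M, dm m := by
    rw [tsum_eq_sum (by intro b hb; rw [if_neg hb])]
    exact Finset.sum_congr rfl fun m hm => if_pos hm
  calc volume (Metric.ball a r ∩ Icc (-1) 1) + ∑' m, dm m * volume (Metric.ball a r ∩ Bm m)
      ≤ ENNReal.ofReal (2*r)
        + ∑' m, (if m ∈ Finset.range M then dm m else 0) * ENNReal.ofReal (2*r) :=
        add_le_add hIcc (ENNReal.tsum_le_tsum hterm)
    _ = ENNReal.ofReal (2*r) + (∑ m ∈ Finset.range M, dm m) * ENNReal.ofReal (2*r) := by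
        rw [ENNReal.tsum_mul_right, htsum]
    _ = (1 + ∑ m ∈ Finset.range M, dm m) * ENNReal.ofReal (2*r) := by ring
    _ ≤ 2^(M+1) * ENNReal.ofReal (2*r) := by
        gcongr
        exact pow_sum_bound M

lemma nu_ball_notmem (p : ℝ) (hp : ∀ m, p ∉ Bm m) :
    ∃ r₀ : ℝ, 0 < r₀ ∧ ∀ r : ℝ, 0 < r → r < r₀ →
      nu (Metric.ball p r) ≤ ENNReal.ofReal (2*r) := by
  set M := ⌈|p|⌉₊ with hM
  have hex : ∀ m : ℕ, ∃ ε : ℝ, 0 < ε ∧ Metric.ball p ε ∩ Bm m = ∅ := by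
    intro m
    obtain ⟨ε, hε, hsub⟩ := Metric.isOpen_iff.mp (Bm_closed m).isOpen_compl p (hp m)
    refine ⟨ε, hε, ?_⟩
    rw [eq_empty_iff_forall_notMem]
    rintro x ⟨h1, h2⟩
    exact hsub h1 h2
  choose ε hε0 hεe using hex
  have hne : (Finset.range (M+1)).Nonempty := ⟨0, Finset.mem_range.mpr (by omega)⟩
  refine ⟨min 2⁻¹ ((Finset.range (M+1)).inf' hne ε), ?_, fun r h0 h1 => ?_⟩
  · apply lt_min (by norm_num)
    rw [Finset.lt_inf'_iff]
    exact fun m _ => hε0 m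
  · have hr2 : r < 2⁻¹ := lt_of_lt_of_le h1 (min_le_left _ _)
    rw [nu_apply measurableSet_ball]
    have hIcc : volume (Metric.ball p r ∩ Icc (-1) 1) ≤ ENNReal.ofReal (2*r) := by
      rw [← vol_ball_real p r h0]
      exact measure_mono inter_subset_left
    have hterm : ∀ m, dm m * volume (Metric.ball p r ∩ Bm m) = 0 := by
      intro m
      by_cases hm : m < M + 1
      · have hr : r ≤ ε m :=
          le_trans (le_trans h1.le (min_le_right _ _))
            (Finset.inf'_le ε (Finset.mem_range.mpr hm))
        have : Metric.ball p r ∩ Bm m = ∅ := by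
          rw [← subset_empty_iff, ← hεe m]
          exact inter_subset_inter_left _ (Metric.ball_subset_ball hr)
        rw [this]
        simp
      · have hm' : M + 1 ≤ m := by omega
        have hempty : Metric.ball p r ∩ Bm m = ∅ := by
          apply ball_inter_Bm_empty
          have hMa : |p| ≤ (M:ℝ) := Nat.le_ceil _
          have hMm : (M:ℝ) + 1 ≤ m := by exact_mod_cast Nat.cast_le.mpr hm'
          have ha : p ≤ |p| := le_abs_self p
          simp only [cm]
          linarith
        rw [hempty]
        simp
    rw [tsum_congr hterm, tsum_zero, add_zero]
    exact hIcc

/-! ### The two-dimensional measure -/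

/-- Component measures. -/
def nus : Fin 2 → Measure ℝ := fun i => if i = 0 then nu else Measure.dirac 0

instance nus_sf (i : Fin 2) : SigmaFinite (nus i) := by
  unfold nus
  split <;> infer_instance

/-- The measure on `ℝ²`. -/
def mu : Measure (Fin 2 → ℝ) := Measure.pi nus

lemma mu_ball (x : Fin 2 → ℝ) {r : ℝ} (hr : 0 < r) :
    mu (Metric.ball x r)
      = nu (Metric.ball (x 0) r) * Measure.dirac (0:ℝ) (Metric.ball (x 1) r) := by
  rw [ball_pi x hr, mu, Measure.pi_pi, Fin.prod_univ_two]
  simp [nus]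

lemma fK_img (x : Fin 2 → ℝ) {r : ℝ} (hr : 0 < r) :
    (fun y : Fin 2 → ℝ => x + r • y) '' Metric.ball 0 1 = Metric.ball x r := by
  rw [show (fun y : Fin 2 → ℝ => x + r • y)
      = (fun z : Fin 2 → ℝ => x +ᵥ z) ∘ (fun y : Fin 2 → ℝ => r • y) from rfl,
    Set.image_comp, Set.image_smul, Set.image_vadd, affinity_unitBall hr x]

lemma fK_eq (x : Fin 2 → ℝ) {r : ℝ} (hr : 0 < r) :
    fK mu (Metric.ball 0 1) x r
      = nu (Metric.ball (x 0) r) * Measure.dirac (0:ℝ) (Metric.ball (x 1) r) := by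
  rw [fK, fK_img x hr, mu_ball x hr]

lemma dirac_ball_one {b r : ℝ} (h : |b| < r) :
    Measure.dirac (0:ℝ) (Metric.ball b r) = 1 := by
  apply Measure.dirac_apply_of_mem
  rw [Metric.mem_ball, Real.dist_eq, zero_sub, abs_neg]
  exact h

lemma fK_u {r : ℝ} (h0 : 0 < r) (h1 : r ≤ 1) :
    fK mu (Metric.ball 0 1) (0 : Fin 2 → ℝ) r = ENNReal.ofReal (2*r) := by
  rw [fK_eq _ h0]
  simp only [Pi.zero_apply]
  rw [dirac_ball_one (by rwa [abs_zero]), mul_one, nu_ball_zero h0 h1]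

lemma fK_le (x : Fin 2 → ℝ) {r : ℝ} (hr : 0 < r) :
    fK mu (Metric.ball 0 1) x r ≤ nu (Metric.ball (x 0) r) := by
  rw [fK_eq x hr]
  calc nu (Metric.ball (x 0) r) * Measure.dirac (0:ℝ) (Metric.ball (x 1) r)
      ≤ nu (Metric.ball (x 0) r) * 1 := mul_le_mul_right prob_le_one _
    _ = nu (Metric.ball (x 0) r) := mul_one _

instance mu_finite : IsFiniteMeasure mu := by
  constructor
  rw [show (univ : Set (Fin 2 → ℝ)) = Set.pi univ (fun _ => univ) by simp,
    mu, Measure.pi_pi, Fin.prod_univ_two]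
  have h0 : nus 0 univ < ⊤ := by
    simp only [nus, if_pos rfl]
    exact measure_lt_top nu univ
  have h1 : nus 1 univ ≤ 1 := by
    simp only [nus]
    norm_num
  calc nus 0 univ * nus 1 univ ≤ nus 0 univ * 1 := mul_le_mul_right h1 _
    _ < ⊤ := by rwa [mul_one]

lemma mu_ne_zero : mu ≠ 0 := by
  intro h
  have hpos : (0:ℝ≥0∞) < mu (Metric.ball (0 : Fin 2 → ℝ) 1) := by
    rw [mu_ball _ one_pos]
    simp only [Pi.zero_apply]
    rw [dirac_ball_one (by rw [abs_zero]; norm_num), mul_one, nu_ball_zero one_pos le_rfl]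
    norm_num
  rw [h] at hpos
  simp at hpos

lemma u_mem_support : (0 : Fin 2 → ℝ) ∈ measSupport mu := by
  intro U hU hu
  obtain ⟨ε, hε, hsub⟩ := Metric.isOpen_iff.mp hU 0 hu
  have h0' : 0 < min ε 1 := lt_min hε one_pos
  calc (0:ℝ≥0∞) < mu (Metric.ball (0 : Fin 2 → ℝ) (min ε 1)) := by
        rw [mu_ball _ h0']
        simp only [Pi.zero_apply]
        rw [dirac_ball_one (by rwa [abs_zero]), mul_one,
          nu_ball_zero h0' (min_le_right _ _)]
        rw [ENNReal.ofReal_pos]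
        linarith
    _ ≤ mu U := measure_mono (le_trans (Metric.ball_subset_ball (min_le_left _ _)) hsub)

/-- The set of rational points. -/
def Eset : Set (Fin 2 → ℝ) := {x : Fin 2 → ℝ | ∀ i, ∃ q : ℚ, x i = (q : ℝ)}

lemma eweak : IsEWeakMode mu (Metric.ball 0 1) Eset (0 : Fin 2 → ℝ) := by
  refine ⟨u_mem_support, fun v hv => ?_⟩
  obtain ⟨q0, hq0⟩ := hv 0
  by_cases h1 : v 1 = 0
  · -- horizontal rational translate
    have hp : ∀ m, ((0:Fin 2 → ℝ) - v) 0 ∉ Bm m := by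
      intro m
      have hcoord : ((0:Fin 2 → ℝ) - v) 0 = ((-q0 : ℚ) : ℝ) := by
        simp [hq0]
      rw [hcoord]
      exact rat_not_mem_Bm m (-q0)
    obtain ⟨r₀, hr₀, hbound⟩ := nu_ball_notmem _ hp
    apply Filter.limsup_le_of_le
    · isBoundedDefault
    have hev : Ioo (0:ℝ) (min r₀ 1) ∈ 𝓝[>] (0:ℝ) :=
      Ioo_mem_nhdsGT_of_mem ⟨le_rfl, lt_min hr₀ one_pos⟩
    filter_upwards [hev] with r hr
    obtain ⟨hra, hrb⟩ := hr
    have hden : fK mu (Metric.ball 0 1) (0 : Fin 2 → ℝ) r = ENNReal.ofReal (2*r) :=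
      fK_u hra (le_trans hrb.le (min_le_right _ _))
    have hnum : fK mu (Metric.ball 0 1) ((0:Fin 2 → ℝ) - v) r ≤ ENNReal.ofReal (2*r) :=
      le_trans (fK_le _ hra) (hbound r hra (lt_of_lt_of_le hrb (min_le_left _ _)))
    apply ENNReal.div_le_of_le_mul
    rw [one_mul, hden]
    exact hnum
  · -- vertical displacement kills the dirac factor
    apply Filter.limsup_le_of_le
    · isBoundedDefault
    have hev : Ioo (0:ℝ) |v 1| ∈ 𝓝[>] (0:ℝ) :=
      Ioo_mem_nhdsGT_of_mem ⟨le_rfl, abs_pos.mpr h1⟩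
    filter_upwards [hev] with r hr
    obtain ⟨hra, hrb⟩ := hr
    have hcoord : ((0:Fin 2 → ℝ) - v) 1 = -(v 1) := by simp
    have hdir : Measure.dirac (0:ℝ) (Metric.ball (((0:Fin 2 → ℝ) - v) 1) r) = 0 := by
      rw [Measure.dirac_apply, Set.indicator_of_notMem]
      rw [hcoord, Metric.mem_ball, Real.dist_eq]
      simp only [zero_sub, neg_neg]
      exact not_lt.mpr hrb.le
    rw [fK_eq _ hra, hdir, mul_zero, ENNReal.zero_div]
    norm_num

lemma not_estrong : ¬ IsEStrongMode mu (Metric.ball 0 1) Eset (0 : Fin 2 → ℝ) := by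
  rintro ⟨-, hB⟩
  have hR : (0:ℝ) < min (tm 2 * 2⁻¹) 1 := lt_min (mul_pos (tm_pos 2) (by norm_num)) one_pos
  have key : ∀ᶠ r in 𝓝[>] (0:ℝ), (2:ℝ≥0∞) ≤
      (⨆ v ∈ Eset, fK mu (Metric.ball 0 1) ((0:Fin 2 → ℝ) - v) r) /
        fK mu (Metric.ball 0 1) (0:Fin 2 → ℝ) r := by
    filter_upwards [Ioo_mem_nhdsGT_of_mem (Set.left_mem_Ico.mpr hR)] with r hr
    obtain ⟨h0, hRr⟩ := hr
    have hr1 : r ≤ 1 := le_trans hRr.le (min_le_right _ _)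
    have hrt : r ≤ tm 2 * 2⁻¹ := le_trans hRr.le (min_le_left _ _)
    -- pick a rational close to `zm 2`
    obtain ⟨p, hp1, hp2⟩ := exists_rat_btwn (show zm 2 - r/2 < zm 2 - r/4 by linarith)
    set v : Fin 2 → ℝ := fun i => if i = 0 then -(p:ℝ) else 0 with hv
    have hvE : v ∈ Eset := by
      intro i
      by_cases h : i = 0
      · exact ⟨-p, by simp [hv, h]⟩
      · exact ⟨0, by simp [hv, h]⟩
    have hc0 : ((0:Fin 2 → ℝ) - v) 0 = (p:ℝ) := by simp [hv]
    have hc1 : ((0:Fin 2 → ℝ) - v) 1 = 0 := by simp [hv]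
    have hball : Metric.ball (zm 2) (r/2) ⊆ Metric.ball ((p:ℝ)) r := by
      apply Metric.ball_subset_ball'
      rw [Real.dist_eq]
      have : |zm 2 - (p:ℝ)| ≤ r/2 := by
        rw [abs_of_nonneg (by linarith)]
        linarith
      linarith
    have hnum : dm 2 * ENNReal.ofReal (7/4 * (r/2))
        ≤ fK mu (Metric.ball 0 1) ((0:Fin 2 → ℝ) - v) r := by
      rw [fK_eq _ h0, hc0, hc1, dirac_ball_one (by rwa [abs_zero]), mul_one]
      calc dm 2 * ENNReal.ofReal (7/4 * (r/2))
          ≤ nu (Metric.ball (zm 2) (r/2)) :=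
            nu_piece_lower 2 (by linarith) (by linarith)
        _ ≤ nu (Metric.ball ((p:ℝ)) r) := measure_mono hball
    have hsup : fK mu (Metric.ball 0 1) ((0:Fin 2 → ℝ) - v) r
        ≤ ⨆ w ∈ Eset, fK mu (Metric.ball 0 1) ((0:Fin 2 → ℝ) - w) r :=
      le_biSup (fun w => fK mu (Metric.ball 0 1) ((0:Fin 2 → ℝ) - w) r) hvE
    have hden : fK mu (Metric.ball 0 1) (0:Fin 2 → ℝ) r = ENNReal.ofReal (2*r) :=
      fK_u h0 hr1
    rw [hden]
    rw [ENNReal.le_div_iff_mul_le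
      (Or.inl (ENNReal.ofReal_pos.mpr (by linarith)).ne') (Or.inl ENNReal.ofReal_ne_top)]
    calc (2:ℝ≥0∞) * ENNReal.ofReal (2*r) = ENNReal.ofReal (4*r) := by
          rw [show ((2:ℝ≥0∞)) = ENNReal.ofReal (2:ℝ) by simp,
            ← ENNReal.ofReal_mul (by norm_num), show (2:ℝ)*(2*r) = 4*r by ring]
      _ ≤ dm 2 * ENNReal.ofReal (7/4 * (r/2)) := by
          rw [show dm 2 = ENNReal.ofReal (8:ℝ) by rw [dm]; simp; norm_num,
            ← ENNReal.ofReal_mul (by norm_num)]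
          apply ENNReal.ofReal_le_ofReal
          linarith
      _ ≤ fK mu (Metric.ball 0 1) ((0:Fin 2 → ℝ) - v) r := hnum
      _ ≤ _ := hsup
  have h2 : (2:ℝ≥0∞) ≤ limsup (fun r : ℝ =>
      (⨆ v ∈ Eset, fK mu (Metric.ball 0 1) ((0:Fin 2 → ℝ) - v) r) /
        fK mu (Metric.ball 0 1) (0:Fin 2 → ℝ) r) (𝓝[>] (0:ℝ)) := by
    exact Filter.le_limsup_of_frequently_le key.frequently
  have := le_trans h2 hB
  norm_num at this

lemma not_strong (w : Fin 2 → ℝ) : ¬ IsStrongMode mu (Metric.ball 0 1) w := by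
  intro hw
  obtain ⟨N, hN⟩ := nu_ball_upper (w 0)
  set m := N + 2 with hm
  have hR : (0:ℝ) < min (tm m * 4⁻¹) 2⁻¹ :=
    lt_min (mul_pos (tm_pos m) (by norm_num)) (by norm_num)
  have key : ∀ᶠ r in 𝓝[>] (0:ℝ), (2:ℝ≥0∞) ≤
      (⨆ z : Fin 2 → ℝ, fK mu (Metric.ball 0 1) z r) / fK mu (Metric.ball 0 1) w r := by
    filter_upwards [Ioo_mem_nhdsGT_of_mem (Set.left_mem_Ico.mpr hR)] with r hr
    obtain ⟨h0, hRr⟩ := hr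
    have hrt : r ≤ tm m * 4⁻¹ := le_trans hRr.le (min_le_left _ _)
    have hr2 : r ≤ 2⁻¹ := le_trans hRr.le (min_le_right _ _)
    set zv : Fin 2 → ℝ := fun i => if i = 0 then zm m else 0 with hzv
    have hnum : dm m * ENNReal.ofReal (7/4 * r)
        ≤ ⨆ z : Fin 2 → ℝ, fK mu (Metric.ball 0 1) z r := by
      calc dm m * ENNReal.ofReal (7/4 * r) ≤ nu (Metric.ball (zm m) r) :=
            nu_piece_lower m h0 hrt
        _ = fK mu (Metric.ball 0 1) zv r := by
            rw [fK_eq _ h0]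
            have hz0 : zv 0 = zm m := by simp [hzv]
            have hz1 : zv 1 = 0 := by simp [hzv]
            rw [hz0, hz1, dirac_ball_one (by rwa [abs_zero]), mul_one]
        _ ≤ _ := le_iSup (fun z => fK mu (Metric.ball 0 1) z r) zv
    have hnum0 : (0:ℝ≥0∞) < dm m * ENNReal.ofReal (7/4 * r) := by
      apply ENNReal.mul_pos
      · rw [dm]; positivity
      · exact (ENNReal.ofReal_pos.mpr (by linarith)).ne'
    have hden : fK mu (Metric.ball 0 1) w r ≤ 2^N * ENNReal.ofReal (2*r) :=
      le_trans (fK_le w h0) (hN r h0 hr2)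
    rcases eq_or_ne (fK mu (Metric.ball 0 1) w r) 0 with hz | hz
    · rw [hz, ENNReal.div_zero (ne_of_gt (lt_of_lt_of_le hnum0 hnum))]
      exact le_top
    · have hfin : fK mu (Metric.ball 0 1) w r ≠ ⊤ :=
        ne_top_of_le_ne_top (by
          apply ENNReal.mul_ne_top
          · exact ENNReal.pow_ne_top (by norm_num)
          · exact ENNReal.ofReal_ne_top) hden
      rw [ENNReal.le_div_iff_mul_le (Or.inl hz) (Or.inl hfin)]
      calc (2:ℝ≥0∞) * fK mu (Metric.ball 0 1) w r
          ≤ 2 * (2^N * ENNReal.ofReal (2*r)) := mul_le_mul_right hden _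
        _ = 2^(N+1) * ENNReal.ofReal (2*r) := by ring
        _ ≤ 2^(N+1) * (4 * ENNReal.ofReal (7/4 * r)) := by
            apply mul_le_mul_right
            rw [show ((4:ℝ≥0∞)) = ENNReal.ofReal (4:ℝ) by simp,
              ← ENNReal.ofReal_mul (by norm_num)]
            apply ENNReal.ofReal_le_ofReal
            linarith
        _ = dm m * ENNReal.ofReal (7/4 * r) := by
            rw [dm, hm]
            ring
        _ ≤ _ := hnum
  have hev2 := hw (Iio_mem_nhds (show (1:ℝ≥0∞) < 2 by norm_num))
  obtain ⟨r, hr1, hr2⟩ := (key.and hev2).exists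
  rw [Set.mem_Iio] at hr2
  exact absurd (lt_of_le_of_lt hr1 hr2) (lt_irrefl _)

end

end Ex42

/-- Example 4.2. There is a finite nonzero Borel measure `μ` on `ℝ²`
and a point `u ∈ supp(μ)` such that, with `K` the open unit ℓ∞-ball (the sup-norm ball of
`Fin 2 → ℝ`) and `E = ℚ²` (which is dense in `ℝ²`), `u` is an `E`-weak mode of `μ` but not
an `E`-strong mode; moreover `μ` has no strong mode at all. -/
theorem exists_Eweak_not_Estrong :
    Dense {x : Fin 2 → ℝ | ∀ i, ∃ q : ℚ, x i = (q : ℝ)} ∧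
    ∃ μ : Measure (Fin 2 → ℝ), IsFiniteMeasure μ ∧ μ ≠ 0 ∧
      ∃ u : Fin 2 → ℝ, u ∈ measSupport μ ∧
        IsEWeakMode μ (Metric.ball (0 : Fin 2 → ℝ) 1)
          {x : Fin 2 → ℝ | ∀ i, ∃ q : ℚ, x i = (q : ℝ)} u ∧
        ¬ IsEStrongMode μ (Metric.ball (0 : Fin 2 → ℝ) 1)
          {x : Fin 2 → ℝ | ∀ i, ∃ q : ℚ, x i = (q : ℝ)} u ∧
        ∀ w : Fin 2 → ℝ, ¬ IsStrongMode μ (Metric.ball (0 : Fin 2 → ℝ) 1) w := by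
  constructor
  · rw [Metric.dense_iff]
    intro x r hr
    have h : ∀ i : Fin 2, ∃ q : ℚ, x i < (q:ℝ) ∧ (q:ℝ) < x i + r := fun i =>
      exists_rat_btwn (by linarith)
    choose qf h1 h2 using h
    refine ⟨fun i => ((qf i : ℝ)), ?_, fun i => ⟨qf i, rfl⟩⟩
    rw [Metric.mem_ball, dist_pi_lt_iff hr]
    intro i
    rw [Real.dist_eq, abs_sub_lt_iff]
    exact ⟨by linarith [h1 i, h2 i], by linarith [h1 i, h2 i]⟩
  · exact ⟨Ex42.mu, Ex42.mu_finite, Ex42.mu_ne_zero, 0, Ex42.u_mem_support,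
      Ex42.eweak, Ex42.not_estrong, Ex42.not_strong⟩
end

section
/- There exists a Borel probability measure μ on ℝ, absolutely continuous with respect to Lebesgue measure, that has no strong mode with respect to K = (−1,1): for every u ∈ ℝ it fails that lim_{r↓0} (sup_{z∈ℝ} μ((z−r, z+r))) / μ((u−r, u+r)) = 1. Concretely, the measure with density ρ(x) = Σ_{n≥1} (1/(2A)) (b/a)ⁿ · 1[|x−n| < b⁻ⁿ], where 1 < a < b, b > 2, and A = Σ_{n≥1} a⁻ⁿ, has this property: for every u ∈ ℝ there are arbitrarily small r > 0 with sup_{z∈ℝ} μ((z−r, z+r)) ≥ (b/a) · μ((u−r, u+r)). -/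
open MeasureTheory Filter Set Topology
open scoped ENNReal NNReal Classical

namespace NSM

noncomputable def Av (a : ℝ) : ℝ := ∑' m : ℕ, a ^ (-((m : ℤ) + 1))
noncomputable def cv (a : ℝ) : ℝ := 1 / (2 * Av a)
noncomputable def rv (b : ℝ) (n : ℕ) : ℝ := b ^ (-((n : ℤ) + 1))
noncomputable def cR (a b : ℝ) (n : ℕ) : ℝ := cv a * (b / a) ^ (n + 1)
noncomputable def Iv (b : ℝ) (n : ℕ) : Set ℝ :=
  Set.Ioo ((n : ℝ) + 1 - rv b n) ((n : ℝ) + 1 + rv b n)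
noncomputable def Cn (a b : ℝ) (n : ℕ) : ℝ≥0∞ := ENNReal.ofReal (cR a b n)
noncomputable def ρv (a b : ℝ) (x : ℝ) : ℝ :=
  ∑' n : ℕ, if |x - ((n : ℝ) + 1)| < b ^ (-((n : ℤ) + 1))
    then cv a * (b / a) ^ (n + 1) else 0
noncomputable def μv (a b : ℝ) : Measure ℝ :=
  volume.withDensity (fun x => ENNReal.ofReal (ρv a b x))

variable {a b : ℝ}

lemma zpow_eq (b : ℝ) (n : ℕ) : b ^ (-((n : ℤ) + 1)) = (b⁻¹) ^ (n + 1) := by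
  have : (-((n : ℤ) + 1)) = -((n + 1 : ℕ) : ℤ) := by push_cast; ring
  rw [this, zpow_neg, zpow_natCast, inv_pow]

lemma rv_eq (n : ℕ) : rv b n = (b⁻¹) ^ (n + 1) := zpow_eq b n

lemma rv_pos (hb : 2 < b) (n : ℕ) : 0 < rv b n := by
  rw [rv_eq]; positivity

lemma rv_lt_half (hb : 2 < b) (n : ℕ) : rv b n < 1 / 2 := by
  rw [rv_eq]
  have hb0 : (0:ℝ) < b := by linarith
  have h1 : b⁻¹ < 1 / 2 := by
    rw [inv_lt_comm₀ hb0 (by norm_num)]; norm_num; linarith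
  have h2 : (b⁻¹) ^ (n + 1) ≤ (b⁻¹) ^ 1 := by
    apply pow_le_pow_of_le_one (by positivity) (by rw [inv_le_one_iff₀]; right; linarith)
    omega
  calc (b⁻¹) ^ (n+1) ≤ (b⁻¹) ^ 1 := h2
    _ = b⁻¹ := pow_one _
    _ < 1/2 := h1

lemma Iv_measurable (n : ℕ) : MeasurableSet (Iv b n) := measurableSet_Ioo

lemma mem_Iv_iff {x : ℝ} {n : ℕ} : x ∈ Iv b n ↔ |x - ((n : ℝ) + 1)| < rv b n := by
  rw [Iv, Set.mem_Ioo, abs_lt]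
  constructor <;> intro h <;> constructor <;> linarith [h.1, h.2]

lemma Iv_unique (hb : 2 < b) {x : ℝ} {n m : ℕ} (hn : x ∈ Iv b n) (hm : x ∈ Iv b m) :
    n = m := by
  rw [mem_Iv_iff] at hn hm
  have h1 := abs_lt.mp hn
  have h2 := abs_lt.mp hm
  have r1 := rv_lt_half hb n
  have r2 := rv_lt_half hb m
  have hnm : (n : ℝ) < (m : ℝ) + 1 := by linarith [h1.1, h1.2, h2.1, h2.2]
  have hmn : (m : ℝ) < (n : ℝ) + 1 := by linarith [h1.1, h1.2, h2.1, h2.2]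
  have hnm' : n < m + 1 := by exact_mod_cast hnm
  have hmn' : m < n + 1 := by exact_mod_cast hmn
  omega

lemma cv_summand_pos (ha : 1 < a) (n : ℕ) : 0 < (a⁻¹) ^ (n + 1) := by positivity

lemma Av_summable (ha : 1 < a) : Summable (fun n : ℕ => a ^ (-((n : ℤ) + 1))) := by
  have : (fun n : ℕ => a ^ (-((n : ℤ) + 1))) = fun n => (a⁻¹) ^ n * a⁻¹ := by
    funext n; rw [zpow_eq, pow_succ]
  rw [this]
  exact (summable_geometric_of_lt_one (by positivity)
    (by rw [inv_lt_one_iff₀]; right; linarith)).mul_right _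

lemma Av_pos (ha : 1 < a) : 0 < Av a := by
  have hs := Av_summable ha
  have h0 : (0:ℝ) < a⁻¹ := inv_pos.mpr (by linarith)
  refine Summable.tsum_pos hs (fun n => ?_) 0 ?_
  · rw [zpow_eq]; exact (pow_pos h0 _).le
  · rw [zpow_eq]; exact pow_pos h0 _

lemma cv_pos (ha : 1 < a) : 0 < cv a := by
  have := Av_pos ha
  rw [cv]; positivity

lemma cR_pos (ha : 1 < a) (hab : a < b) (n : ℕ) : 0 < cR a b n := by
  have h1 := cv_pos ha
  have hba : 0 < b / a := div_pos (by linarith) (by linarith)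
  exact mul_pos h1 (pow_pos hba _)

lemma density_eq (ha : 1 < a) (hab : a < b) (hb : 2 < b) :
    (fun x => ENNReal.ofReal (ρv a b x)) =
      fun x => ∑' n : ℕ, (Iv b n).indicator (fun _ => Cn a b n) x := by
  funext x
  by_cases h : ∃ n, x ∈ Iv b n
  · obtain ⟨n₀, hn₀⟩ := h
    have hcond : ∀ (n : ℕ) (y : ℝ),
        (|y - ((n : ℝ) + 1)| < b ^ (-((n : ℤ) + 1))) ↔ y ∈ Iv b n :=
      fun n y => mem_Iv_iff.symm
    have hL : ρv a b x = cR a b n₀ := by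
      rw [ρv]
      simp only [hcond]
      rw [tsum_eq_single n₀ (fun m hm => ?_)]
      · rw [if_pos hn₀]; rfl
      · rw [if_neg]
        intro hmem
        exact hm (Iv_unique hb hmem hn₀)
    have hR : ∑' n : ℕ, (Iv b n).indicator (fun _ => Cn a b n) x = Cn a b n₀ := by
      rw [tsum_eq_single n₀ (fun m hm => ?_)]
      · exact Set.indicator_of_mem hn₀ _
      · exact Set.indicator_of_notMem (fun hmem => hm (Iv_unique hb hmem hn₀)) _
    rw [hL, hR]; rfl
  · push_neg at h
    have hL : ρv a b x = 0 := by
      rw [ρv]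
      convert tsum_zero with n
      rw [if_neg (fun hmem => h n (mem_Iv_iff.mpr (by exact hmem)))]
    have hR : ∑' n : ℕ, (Iv b n).indicator (fun _ => Cn a b n) x = 0 := by
      convert tsum_zero with n
      exact Set.indicator_of_notMem (h n) _
    rw [hL, hR, ENNReal.ofReal_zero]

lemma μv_apply (ha : 1 < a) (hab : a < b) (hb : 2 < b) {E : Set ℝ}
    (hE : MeasurableSet E) :
    μv a b E = ∑' n : ℕ, Cn a b n * volume (E ∩ Iv b n) := by
  rw [μv, density_eq ha hab hb, withDensity_apply _ hE,
    lintegral_tsum (fun n => (measurable_const.indicator (Iv_measurable n)).aemeasurable)]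
  congr 1
  funext n
  rw [lintegral_indicator_const (Iv_measurable n), Measure.restrict_apply (Iv_measurable n),
    Set.inter_comm]

lemma vol_Iv (hb : 2 < b) (n : ℕ) : volume (Iv b n) = ENNReal.ofReal (2 * rv b n) := by
  rw [Iv, Real.volume_Ioo]
  congr 1; ring

lemma μv_prob (ha : 1 < a) (hab : a < b) (hb : 2 < b) :
    IsProbabilityMeasure (μv a b) := by
  constructor
  rw [μv_apply ha hab hb MeasurableSet.univ]
  have hb0 : (0:ℝ) < b := by linarith
  have ha0 : (0:ℝ) < a := by linarith
  have key : ∀ n : ℕ, Cn a b n * volume (Set.univ ∩ Iv b n)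
      = ENNReal.ofReal (2 * cv a * (a⁻¹) ^ (n + 1)) := by
    intro n
    rw [Set.univ_inter, vol_Iv hb, Cn, ← ENNReal.ofReal_mul (cR_pos ha hab n).le]
    congr 1
    rw [cR, rv_eq]
    have : (b / a) ^ (n + 1) * (b⁻¹) ^ (n + 1) = (a⁻¹) ^ (n + 1) := by
      rw [← mul_pow]
      congr 1
      field_simp
    calc cv a * (b / a) ^ (n + 1) * (2 * (b⁻¹) ^ (n + 1))
        = 2 * cv a * ((b / a) ^ (n + 1) * (b⁻¹) ^ (n + 1)) := by ring
      _ = 2 * cv a * (a⁻¹) ^ (n + 1) := by rw [this]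
  simp_rw [key]
  have hsum : Summable (fun n : ℕ => 2 * cv a * (a⁻¹) ^ (n + 1)) := by
    have : (fun n : ℕ => (a⁻¹) ^ (n + 1)) = fun n => (a⁻¹) ^ n * a⁻¹ := by
      funext n; rw [pow_succ]
    apply Summable.mul_left
    rw [this]
    exact (summable_geometric_of_lt_one (by positivity)
      (by rw [inv_lt_one_iff₀]; right; linarith)).mul_right _
  have hnn : ∀ n : ℕ, 0 ≤ 2 * cv a * (a⁻¹) ^ (n + 1) := fun n =>
    (mul_pos (mul_pos two_pos (cv_pos ha)) (pow_pos (inv_pos.mpr (by linarith)) _)).le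
  rw [← ENNReal.ofReal_tsum_of_nonneg hnn hsum]
  rw [tsum_mul_left]
  have hAv : ∑' n : ℕ, (a⁻¹) ^ (n + 1) = Av a := by
    rw [Av]
    congr 1; funext n; rw [zpow_eq]
  rw [hAv]
  have hA := Av_pos ha
  have : 2 * cv a * Av a = 1 := by
    rw [cv]; field_simp
  rw [this, ENNReal.ofReal_one]

lemma Cn_mono (ha : 1 < a) (hab : a < b) {n m : ℕ} (h : n ≤ m) :
    Cn a b n ≤ Cn a b m := by
  apply ENNReal.ofReal_le_ofReal
  rw [cR, cR]
  apply mul_le_mul_of_nonneg_left _ (cv_pos ha).le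
  apply pow_le_pow_right₀ _ (by omega)
  rw [le_div_iff₀ (by linarith)]; linarith

lemma upper (ha : 1 < a) (hab : a < b) (hb : 2 < b) (u r : ℝ) (hr : r < 1 / 2) :
    μv a b (Set.Ioo (u - r) (u + r)) ≤ Cn a b ⌈u⌉₊ * ENNReal.ofReal (2 * r) := by
  set K := ⌈u⌉₊ with hK
  rw [μv_apply ha hab hb measurableSet_Ioo]
  calc ∑' n : ℕ, Cn a b n * volume (Set.Ioo (u - r) (u + r) ∩ Iv b n)
      ≤ ∑' n : ℕ, Cn a b K * volume (Set.Ioo (u - r) (u + r) ∩ Iv b n) := by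
        apply ENNReal.tsum_le_tsum
        intro n
        by_cases hv : volume (Set.Ioo (u - r) (u + r) ∩ Iv b n) = 0
        · rw [hv, mul_zero, mul_zero]
        · apply mul_le_mul_left
          obtain ⟨x, hx⟩ := nonempty_of_measure_ne_zero hv
          have hx1 : x < u + r := hx.1.2
          have hx2 : (n : ℝ) + 1 - rv b n < x := hx.2.1
          have := rv_lt_half hb n
          have hnu : (n : ℝ) < u := by linarith
          have : (n : ℝ) < (K : ℝ) := lt_of_lt_of_le hnu (by exact_mod_cast Nat.le_ceil u)
          exact Cn_mono ha hab (le_of_lt (by exact_mod_cast this))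
    _ = Cn a b K * ∑' n : ℕ, volume (Set.Ioo (u - r) (u + r) ∩ Iv b n) :=
        ENNReal.tsum_mul_left
    _ ≤ Cn a b K * ENNReal.ofReal (2 * r) := by
        apply mul_le_mul_right
        have hdisj : Pairwise (Function.onFun Disjoint
            (fun n => Set.Ioo (u - r) (u + r) ∩ Iv b n)) := by
          intro n m hnm
          rw [Function.onFun, Set.disjoint_left]
          rintro x ⟨-, hxn⟩ ⟨-, hxm⟩
          exact hnm (Iv_unique hb hxn hxm)
        rw [← measure_iUnion hdisj
          (fun n => measurableSet_Ioo.inter (Iv_measurable n))]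
        calc volume (⋃ n, Set.Ioo (u - r) (u + r) ∩ Iv b n)
            ≤ volume (Set.Ioo (u - r) (u + r)) :=
              measure_mono (Set.iUnion_subset fun n => Set.inter_subset_left)
          _ = ENNReal.ofReal (2 * r) := by rw [Real.volume_Ioo]; congr 1; ring

lemma lower (ha : 1 < a) (hab : a < b) (hb : 2 < b) (m : ℕ) (r : ℝ)
    (hr : r ≤ rv b m) :
    Cn a b m * ENNReal.ofReal (2 * r) ≤
      μv a b (Set.Ioo (((m : ℝ) + 1) - r) (((m : ℝ) + 1) + r)) := by
  rw [μv_apply ha hab hb measurableSet_Ioo]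
  have hsub : Set.Ioo (((m : ℝ) + 1) - r) (((m : ℝ) + 1) + r) ⊆ Iv b m :=
    Set.Ioo_subset_Ioo (by linarith) (by linarith)
  have hinter : Set.Ioo (((m : ℝ) + 1) - r) (((m : ℝ) + 1) + r) ∩ Iv b m
      = Set.Ioo (((m : ℝ) + 1) - r) (((m : ℝ) + 1) + r) := Set.inter_eq_left.mpr hsub
  have : Cn a b m * ENNReal.ofReal (2 * r)
      = Cn a b m * volume (Set.Ioo (((m : ℝ) + 1) - r) (((m : ℝ) + 1) + r) ∩ Iv b m) := by
    rw [hinter, Real.volume_Ioo]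
    congr 2; ring
  rw [this]
  exact ENNReal.le_tsum m

lemma key (ha : 1 < a) (hab : a < b) (hb : 2 < b) (u ε : ℝ) (hε : 0 < ε) :
    ∃ r : ℝ, 0 < r ∧ r < ε ∧
      ENNReal.ofReal (b / a) * μv a b (Set.Ioo (u - r) (u + r)) ≤
        (⨆ z : ℝ, μv a b (Set.Ioo (z - r) (z + r))) ∧
      (⨆ z : ℝ, μv a b (Set.Ioo (z - r) (z + r))) ≠ 0 := by
  set K := ⌈u⌉₊ with hK
  have hrvpos := rv_pos hb (K + 1)
  refine ⟨min (ε / 2) (min (1 / 4) (rv b (K + 1))), ?_, ?_, ?_, ?_⟩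
  · exact lt_min (by linarith) (lt_min (by norm_num) hrvpos)
  · calc min (ε / 2) (min (1 / 4) (rv b (K + 1))) ≤ ε / 2 := min_le_left _ _
      _ < ε := by linarith
  · set r := min (ε / 2) (min (1 / 4) (rv b (K + 1))) with hr
    have hr0 : 0 < r := lt_min (by linarith) (lt_min (by norm_num) hrvpos)
    have hrhalf : r < 1 / 2 := by
      calc r ≤ 1 / 4 := le_trans (min_le_right _ _) (min_le_left _ _)
        _ < 1 / 2 := by norm_num
    have hrle : r ≤ rv b (K + 1) := le_trans (min_le_right _ _) (min_le_right _ _)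
    have hCnstep : Cn a b (K + 1) = ENNReal.ofReal (b / a) * Cn a b K := by
      rw [Cn, Cn, ← ENNReal.ofReal_mul (by positivity)]
      congr 1
      rw [cR, cR]; ring
    calc ENNReal.ofReal (b / a) * μv a b (Set.Ioo (u - r) (u + r))
        ≤ ENNReal.ofReal (b / a) * (Cn a b K * ENNReal.ofReal (2 * r)) :=
          mul_le_mul_right (upper ha hab hb u r hrhalf) _
      _ = Cn a b (K + 1) * ENNReal.ofReal (2 * r) := by rw [hCnstep]; ring
      _ ≤ μv a b (Set.Ioo ((((K + 1 : ℕ) : ℝ) + 1) - r) ((((K + 1 : ℕ) : ℝ) + 1) + r)) :=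
          lower ha hab hb (K + 1) r hrle
      _ ≤ ⨆ z : ℝ, μv a b (Set.Ioo (z - r) (z + r)) :=
          le_iSup (fun z => μv a b (Set.Ioo (z - r) (z + r))) (((K + 1 : ℕ) : ℝ) + 1)
  · set r := min (ε / 2) (min (1 / 4) (rv b (K + 1))) with hr
    have hr0 : 0 < r := lt_min (by linarith) (lt_min (by norm_num) hrvpos)
    have hrle : r ≤ rv b (K + 1) := le_trans (min_le_right _ _) (min_le_right _ _)
    intro h0
    have hge := lower ha hab hb (K + 1) r hrle
    have hsup : μv a b (Set.Ioo ((((K + 1 : ℕ) : ℝ) + 1) - r) ((((K + 1 : ℕ) : ℝ) + 1) + r))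
        ≤ ⨆ z : ℝ, μv a b (Set.Ioo (z - r) (z + r)) :=
      le_iSup (fun z => μv a b (Set.Ioo (z - r) (z + r))) (((K + 1 : ℕ) : ℝ) + 1)
    rw [h0] at hsup
    have : Cn a b (K + 1) * ENNReal.ofReal (2 * r) = 0 := le_antisymm (le_trans hge hsup) zero_le
    rcases mul_eq_zero.mp this with h | h
    · rw [Cn, ENNReal.ofReal_eq_zero] at h
      exact absurd h (not_le.mpr (cR_pos ha hab (K + 1)))
    · rw [ENNReal.ofReal_eq_zero] at h
      linarith

end NSM

/-- Example 5.7. A Borel probability measure on `ℝ`, absolutely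
continuous w.r.t. Lebesgue measure, with no strong mode w.r.t. `K = (−1,1)`: the measure
with density `ρ(x) = Σ_{n≥1} (1/(2A)) (b/a)ⁿ · 1[|x−n| < b⁻ⁿ]` (where `1 < a < b`,
`b > 2`, `A = Σ_{n≥1} a⁻ⁿ`) satisfies, for every `u ∈ ℝ`:
the small-ball ratio does not tend to `1`, and indeed there are arbitrarily small `r > 0`
with `sup_z μ((z−r,z+r)) ≥ (b/a) · μ((u−r,u+r))`. -/
theorem exists_probability_measure_without_strong_mode
    (a b : ℝ) (ha : 1 < a) (hab : a < b) (hb : 2 < b) :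
    ∃ μ : Measure ℝ, IsProbabilityMeasure μ ∧ μ ≪ volume ∧
      μ = volume.withDensity (fun x => ENNReal.ofReal
        (∑' n : ℕ,
          if |x - ((n : ℝ) + 1)| < b ^ (-((n : ℤ) + 1))
          then (1 / (2 * ∑' m : ℕ, a ^ (-((m : ℤ) + 1)))) * (b / a) ^ (n + 1)
          else 0)) ∧
      ∀ u : ℝ,
        (¬ Tendsto
            (fun r : ℝ => (⨆ z : ℝ, μ (Ioo (z - r) (z + r))) / μ (Ioo (u - r) (u + r)))
            (𝓝[>] (0:ℝ)) (𝓝 1)) ∧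
        ∀ ε : ℝ, 0 < ε → ∃ r : ℝ, 0 < r ∧ r < ε ∧
          ENNReal.ofReal (b / a) * μ (Ioo (u - r) (u + r)) ≤
            ⨆ z : ℝ, μ (Ioo (z - r) (z + r)) := by
  have hprob := NSM.μv_prob ha hab hb
  refine ⟨NSM.μv a b, hprob, withDensity_absolutelyContinuous _ _, rfl, ?_⟩
  intro u
  haveI := hprob
  constructor
  · intro hT
    have h1lt : (1:ℝ≥0∞) < ENNReal.ofReal (b / a) := by
      rw [← ENNReal.ofReal_one,
        ENNReal.ofReal_lt_ofReal_iff (div_pos (by linarith) (by linarith))]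
      rw [lt_div_iff₀ (by linarith)]; linarith
    have hev := hT.eventually_lt_const h1lt
    rw [eventually_nhdsWithin_iff, Metric.eventually_nhds_iff] at hev
    obtain ⟨δ, hδ0, hδ⟩ := hev
    obtain ⟨r, hr0, hrδ, hkey, hS0⟩ := NSM.key ha hab hb u δ hδ0
    have hratio := hδ
      (show dist r 0 < δ by rw [Real.dist_eq, sub_zero, abs_of_pos hr0]; exact hrδ)
      (mem_Ioi.mpr hr0)
    have hDtop : NSM.μv a b (Ioo (u - r) (u + r)) ≠ ∞ := measure_ne_top _ _
    have hge : ENNReal.ofReal (b / a) ≤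
        (⨆ z : ℝ, NSM.μv a b (Ioo (z - r) (z + r))) / NSM.μv a b (Ioo (u - r) (u + r)) := by
      rw [ENNReal.le_div_iff_mul_le (Or.inr hS0) (Or.inl hDtop)]
      exact hkey
    exact absurd hratio (not_lt.mpr hge)
  · intro ε hε
    obtain ⟨r, hr0, hrε, hkey, -⟩ := NSM.key ha hab hb u ε hε
    exact ⟨r, hr0, hrε, hkey⟩
end
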